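/- arXiv:2211.13134 — 7 statements merged into one kernel-verified Lean document; each statement's English description precedes it below -/
import Mathlib

section
/- Let (F_n)_{n∈ℕ} be a sequence in [-∞, ∞) (ℕ = {1,2,3,...}), and suppose there exist sequences (σ_n)_{n∈ℕ} and (R_n)_{n∈ℕ} of nonnegative integers with σ_n/n → 0 and R_n/n → 0 as n → ∞, such that F_{n+σ_n+m} ≤ F_n + R_n + F_m for all n, m ∈ ℕ. Then lim_{n→∞} F_n/n exists in [-∞, ∞) and equals F := inf_{n∈ℕ} (F_n + R_n)/(n + σ_n), understood in [-∞, ∞). -/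
open Filter Topology

-- aux: real limit of the perturbation
lemma aux_pert (σ R : ℕ → ℕ)
    (hσ : Filter.Tendsto (fun n => (σ n : ℝ) / n) Filter.atTop (𝓝 0))
    (hR : Filter.Tendsto (fun n => (R n : ℝ) / n) Filter.atTop (𝓝 0)) (b : ℝ) :
    Filter.Tendsto (fun N => b + (b * σ N - R N) / N) Filter.atTop (𝓝 b) := by
  have h : (fun N : ℕ => b + (b * σ N - R N) / N)
      = fun N => b + (b * ((σ N : ℝ) / N) - (R N : ℝ) / N) := by
    funext N; rw [sub_div, mul_div_assoc]
  rw [h]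
  have := ((hσ.const_mul b).sub hR).const_add b
  simpa using this

-- aux: k_N / N → 1/p
lemma aux_kdiv (p : ℕ) (hp : 1 ≤ p) :
    Filter.Tendsto (fun N : ℕ => (((N - 1) / p : ℕ) : ℝ) / N) Filter.atTop (𝓝 (1 / p)) := by
  have hp' : (0:ℝ) < p := by exact_mod_cast hp
  apply tendsto_of_tendsto_of_tendsto_of_le_of_le'
      (g := fun N : ℕ => 1 / (p:ℝ) - 1 / N) (h := fun N : ℕ => 1 / (p:ℝ))
  · simpa using (tendsto_const_nhds (x := 1/(p:ℝ))).sub tendsto_one_div_atTop_nhds_zero_nat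
  · exact tendsto_const_nhds
  · filter_upwards [eventually_ge_atTop 1] with N hN
    have hN' : (0:ℝ) < N := by exact_mod_cast hN
    set k := (N - 1) / p with hk
    have h1 : k * p + (N-1) % p = N - 1 := Nat.div_add_mod' (N-1) p
    have h2 : (N-1) % p < p := Nat.mod_lt _ hp
    have h3 : (N : ℝ) - p ≤ k * p := by
      have : N ≤ k * p + p := by omega
      have := (Nat.cast_le (α := ℝ)).2 this
      push_cast at this ⊢; linarith
    rw [sub_le_iff_le_add, ← add_div, div_le_div_iff₀ hp' hN']
    nlinarith [h3]
  · filter_upwards [eventually_ge_atTop 1] with N hN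
    have hN' : (0:ℝ) < N := by exact_mod_cast hN
    set k := (N - 1) / p with hk
    have h1 : k * p ≤ N - 1 := Nat.div_mul_le_self (N-1) p
    have h4 : (k:ℝ) * p ≤ N := by
      have : k * p ≤ N := le_trans h1 (Nat.sub_le _ _)
      exact_mod_cast this
    rw [div_le_div_iff₀ hN' hp']
    nlinarith


/-- **Gapped Fekete lemma.**  If `F : ℕ → [-∞, ∞)` satisfies the gapped almost
subadditivity condition `F (n + σ n + m) ≤ F n + R n + F m` for all `n, m ≥ 1`,
with nonnegative integer sequences `σ` and `R` that are `o(n)`, then `F n / n`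
converges to `inf_{n ≥ 1} (F n + R n) / (n + σ n)` in `[-∞, ∞)`. -/
theorem gapped_fekete (F : ℕ → EReal) (hFtop : ∀ n, 1 ≤ n → F n < ⊤)
    (σ R : ℕ → ℕ)
    (hσ : Filter.Tendsto (fun n => (σ n : ℝ) / n) Filter.atTop (𝓝 0))
    (hR : Filter.Tendsto (fun n => (R n : ℝ) / n) Filter.atTop (𝓝 0))
    (hsub : ∀ n m, 1 ≤ n → 1 ≤ m →
      F (n + σ n + m) ≤ F n + (R n : EReal) + F m) :
    (⨅ n ∈ Set.Ici 1, (F n + (R n : EReal)) / ((n : EReal) + (σ n : EReal))) < ⊤ ∧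
    Filter.Tendsto (fun n => F n / (n : EReal)) Filter.atTop
      (𝓝 (⨅ n ∈ Set.Ici 1, (F n + (R n : EReal)) / ((n : EReal) + (σ n : EReal)))) := by
  set t : ℕ → EReal := fun n => (F n + (R n : EReal)) / ((n : EReal) + (σ n : EReal)) with ht
  set L : EReal := ⨅ n ∈ Set.Ici 1, t n with hL
  -- denominator facts
  have hden : ∀ n : ℕ, (n : EReal) + (σ n : EReal) = (((n + σ n : ℕ) : ℝ) : EReal) := by
    intro n
    rw [← EReal.coe_coe_eq_natCast n, ← EReal.coe_coe_eq_natCast (σ n), ← EReal.coe_add]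
    push_cast
    ring_nf
  have hdenpos : ∀ n : ℕ, 1 ≤ n → (0 : EReal) < (n : EReal) + (σ n : EReal) := by
    intro n hn
    rw [hden]
    exact_mod_cast EReal.coe_pos.2 (by positivity : (0:ℝ) < ((n + σ n : ℕ) : ℝ))
  have hdenne : ∀ n : ℕ, (n : EReal) + (σ n : EReal) ≠ ⊤ := by
    intro n; rw [hden]; exact EReal.coe_ne_top _
  -- L ≤ t n
  have hLle : ∀ n, 1 ≤ n → L ≤ t n := fun n hn => biInf_le t hn
  -- Part 1 : L < ⊤
  have hLtop : L < ⊤ := by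
    refine lt_of_le_of_lt (hLle 1 le_rfl) ?_
    have h1 : F 1 + (R 1 : EReal) ≤ (((F 1).toReal + R 1 : ℝ) : EReal) := by
      rw [EReal.coe_add]
      gcongr
      · exact EReal.le_coe_toReal (hFtop 1 le_rfl).ne
      · exact le_of_eq (EReal.coe_coe_eq_natCast (R 1)).symm
    calc t 1 ≤ (((F 1).toReal + R 1 : ℝ) : EReal) / (((1:ℕ) : EReal) + (σ 1 : EReal)) :=
          EReal.div_le_div_right_of_nonneg (hdenpos 1 le_rfl).le h1
      _ < ⊤ := by
          rw [hden 1, ← EReal.coe_div]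
          exact EReal.coe_lt_top _
  -- Part 2a : limsup ≤ t n for each n ≥ 1
  have hlimsup : ∀ n, 1 ≤ n →
      Filter.limsup (fun N => F N / (N : EReal)) Filter.atTop ≤ t n := by
    intro n hn
    set p := n + σ n with hpdef
    have hp : 1 ≤ p := le_trans hn (Nat.le_add_right _ _)
    have hNcast : ∀ N : ℕ, 1 ≤ N → (0 : EReal) < (N : EReal) := by
      intro N hN
      rw [← EReal.coe_coe_eq_natCast]
      exact EReal.coe_pos.2 (by exact_mod_cast hN)
    have hNne : ∀ N : ℕ, (N : EReal) ≠ ⊤ := by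
      intro N; rw [← EReal.coe_coe_eq_natCast]; exact EReal.coe_ne_top _
    by_cases hFb : F n = ⊥
    · have htn : t n = ⊥ := by
        show (F n + (R n : EReal)) / _ = ⊥
        rw [hFb, EReal.bot_add, EReal.bot_div_of_pos_ne_top (hdenpos n hn) (hdenne n)]
      rw [htn]
      refine Filter.limsup_le_of_le (by isBoundedDefault) ?_
      filter_upwards [eventually_ge_atTop (p + 1)] with N hN
      have hm : 1 ≤ N - p := by omega
      have h1 : F N ≤ ⊥ := by
        have h2 := hsub n (N - p) hn hm
        rw [hFb] at h2
        simp only [EReal.bot_add] at h2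
        have hNe : n + σ n + (N - p) = N := by omega
        rwa [hNe] at h2
      rw [le_bot_iff.1 h1,
        EReal.bot_div_of_pos_ne_top (hNcast N (by omega)) (hNne N)]
    · have hFt : F n ≠ ⊤ := (hFtop n hn).ne
      set c : ℝ := (F n).toReal + R n with hc
      have hFn : F n + (R n : EReal) = (c : EReal) := by
        rw [← EReal.coe_toReal hFt hFb, ← EReal.coe_coe_eq_natCast (R n), ← EReal.coe_add]
      have key : ∀ k m, 1 ≤ m → F (k * p + m) ≤ ((k * c : ℝ) : EReal) + F m := by
        intro k
        induction k with
        | zero => intro m hm; simp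
        | succ k ih =>
          intro m hm
          have h1 : (k + 1) * p + m = n + σ n + (k * p + m) := by rw [hpdef]; ring
          calc F ((k + 1) * p + m) = F (n + σ n + (k * p + m)) := by rw [h1]
            _ ≤ F n + (R n : EReal) + F (k * p + m) :=
                hsub n (k * p + m) hn (le_trans hm (Nat.le_add_left m (k * p)))
            _ ≤ F n + (R n : EReal) + (((k * c : ℝ) : EReal) + F m) :=
                add_le_add_right (ih m hm) _
            _ = (((k + 1 : ℕ) * c : ℝ) : EReal) + F m := by
                rw [hFn, ← add_assoc, ← EReal.coe_add]
                congr 2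
                push_cast
                ring
      obtain ⟨B, hB⟩ : ∃ B : ℝ, ∀ m, 1 ≤ m → m ≤ p → F m ≤ (B : EReal) := by
        refine ⟨(Finset.Icc 1 p).sup' (Finset.nonempty_Icc.2 hp) (fun m => (F m).toReal), ?_⟩
        intro m hm1 hm2
        refine le_trans (EReal.le_coe_toReal (hFtop m hm1).ne) ?_
        exact EReal.coe_le_coe_iff.2 (Finset.le_sup' (fun m => (F m).toReal) (Finset.mem_Icc.2 ⟨hm1, hm2⟩))
      set g : ℕ → ℝ := fun N => (((N - 1) / p : ℕ) * c + B) / N with hg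
      have hev : ∀ᶠ N in Filter.atTop, F N / (N : EReal) ≤ ((g N : ℝ) : EReal) := by
        filter_upwards [eventually_ge_atTop 1] with N hN
        set k := (N - 1) / p with hk
        set m := N - k * p with hm
        have h1 : k * p + (N - 1) % p = N - 1 := Nat.div_add_mod' (N - 1) p
        have h1' : (N - 1) % p < p := Nat.mod_lt _ hp
        have hm1 : 1 ≤ m := by omega
        have hm2 : m ≤ p := by omega
        have hNm : k * p + m = N := by omega
        have h2 : F N ≤ ((k * c + B : ℝ) : EReal) := by
          calc F N = F (k * p + m) := by rw [hNm]
            _ ≤ ((k * c : ℝ) : EReal) + F m := key k m hm1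
            _ ≤ ((k * c : ℝ) : EReal) + (B : EReal) := add_le_add_right (hB m hm1 hm2) _
            _ = _ := by rw [← EReal.coe_add]
        calc F N / (N : EReal) ≤ ((k * c + B : ℝ) : EReal) / (N : EReal) :=
              EReal.div_le_div_right_of_nonneg (hNcast N hN).le h2
          _ = ((g N : ℝ) : EReal) := by
              rw [hg, ← EReal.coe_coe_eq_natCast N, ← EReal.coe_div]
      have hgt : Filter.Tendsto g Filter.atTop (𝓝 (c / p)) := by
        have h1 := ((aux_kdiv p hp).mul_const c).add
          (tendsto_const_div_atTop_nhds_zero_nat B)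
        have he : ∀ᶠ N in Filter.atTop,
            ((((N - 1) / p : ℕ) : ℝ) / N * c + B / N) = g N := by
          filter_upwards [eventually_ge_atTop 1] with N hN
          have hN0 : (N : ℝ) ≠ 0 := by
            have : (0:ℝ) < N := by exact_mod_cast hN
            exact this.ne'
          rw [hg]
          field_simp
        have h2 := h1.congr' he
        have h3 : 1 / (p : ℝ) * c + 0 = c / p := by ring
        rwa [h3] at h2
      have hco : Filter.Tendsto (fun N => ((g N : ℝ) : EReal)) Filter.atTop
          (𝓝 ((c / p : ℝ) : EReal)) := EReal.tendsto_coe.2 hgt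
      have htn : t n = ((c / p : ℝ) : EReal) := by
        show (F n + (R n : EReal)) / _ = _
        rw [hFn, hden n, ← EReal.coe_div]
      rw [htn, ← hco.limsup_eq]
      exact Filter.limsup_le_limsup hev
  -- Part 2b : L ≤ liminf
  have hliminf : L ≤ Filter.liminf (fun N => F N / (N : EReal)) Filter.atTop := by
    refine EReal.ge_of_forall_gt_iff_ge.1 fun b hb => ?_
    have hev : ∀ᶠ N in Filter.atTop,
        ((b + (b * σ N - R N) / N : ℝ) : EReal) ≤ F N / (N : EReal) := by
      filter_upwards [eventually_ge_atTop 1] with N hN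
      have hbt : (b : EReal) < t N := lt_of_lt_of_le hb (hLle N hN)
      have hFbot : F N ≠ ⊥ := by
        intro h
        have : t N = ⊥ := by
          show (F N + (R N : EReal)) / _ = ⊥
          rw [h, EReal.bot_add, EReal.bot_div_of_pos_ne_top (hdenpos N hN) (hdenne N)]
        rw [this] at hbt
        exact not_lt_bot hbt
      have hFt : F N ≠ ⊤ := (hFtop N hN).ne
      have htN : t N = (((((F N).toReal) + R N) / (N + σ N) : ℝ) : EReal) := by
        show (F N + (R N : EReal)) / _ = _
        rw [← EReal.coe_toReal hFt hFbot, ← EReal.coe_coe_eq_natCast (R N), ← EReal.coe_add,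
          hden N, ← EReal.coe_div]
        congr 1
        push_cast [EReal.toReal_coe]
        ring
      rw [htN, EReal.coe_lt_coe_iff] at hbt
      have hNpos : (0:ℝ) < N := by exact_mod_cast hN
      have hdpos : (0:ℝ) < (N:ℝ) + σ N := by positivity
      have h2 : b * ((N:ℝ) + σ N) < (F N).toReal + R N := (lt_div_iff₀ hdpos).1 hbt
      have h3 : b + (b * σ N - R N) / N ≤ (F N).toReal / N := by
        have he : b + (b * (σ N:ℝ) - R N) / N = (b * ((N:ℝ) + σ N) - R N) / N := by
          field_simp
          ring
        rw [he]
        gcongr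
        linarith
      calc ((b + (b * σ N - R N) / N : ℝ) : EReal)
          ≤ (((F N).toReal / N : ℝ) : EReal) := EReal.coe_le_coe_iff.2 h3
        _ = F N / (N : EReal) := by
            rw [EReal.coe_div, EReal.coe_toReal hFt hFbot, EReal.coe_coe_eq_natCast]
    calc (b : EReal)
        = Filter.liminf (fun N => ((b + (b * σ N - R N) / N : ℝ) : EReal)) Filter.atTop := by
          symm
          exact (EReal.tendsto_coe.2 (aux_pert σ R hσ hR b)).liminf_eq
      _ ≤ _ := Filter.liminf_le_liminf hev
  refine ⟨hLtop, tendsto_of_le_liminf_of_limsup_le hliminf ?_⟩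
  exact le_iInf₂ fun n hn => hlimsup n hn
end

section
/- Let 𝒜 be a finite nonempty alphabet and let ℙ and ℚ be shift-invariant probability measures on 𝒜^ℕ. Suppose ℚ satisfies the upper-decoupling condition: there exist sequences (c_n)_{n∈ℕ} of nonnegative reals and (τ_n)_{n∈ℕ} of nonnegative integers with c_n/n → 0 and τ_n/n → 0 such that ℚ{x : x_1^n = a, x_{n+τ_n+1}^{n+τ_n+m} = b} ≤ e^{c_n} ℚ{x : x_1^n = a} · ℚ{x : x_{n+τ_n+1}^{n+τ_n+m} = b} for all a ∈ 𝒜^n, n ∈ ℕ, b ∈ 𝒜^m, m ∈ ℕ. Then the (possibly infinite) specific relative entropy of ℙ with respect to ℚ exists; that is, the limit lim_{n→∞} (1/n) D(ℙ_n ‖ ℚ_n) exists in [0, ∞], where ℙ_n and ℚ_n are the marginals of ℙ and ℚ on 𝒜^n (the pushforwards along x ↦ x_1^n) and D(·‖·) is the relative entropy (Kullback–Leibler divergence). -/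
open Filter Topology MeasureTheory

set_option maxHeartbeats 1000000

namespace SRE



variable {B : Type*} [Fintype B]

noncomputable def rEnt (p q : B → ℝ) : ℝ := ∑ b, p b * Real.log (p b / q b)

private lemma log_sub_log_le {x y : ℝ} (hx : 0 < x) (hy : 0 < y) :
    Real.log x - Real.log y ≤ x / y - 1 := by
  have := Real.log_le_sub_one_of_pos (div_pos hx hy)
  rwa [Real.log_div hx.ne' hy.ne'] at this

/-- log-sum inequality -/
lemma logSum {ι : Type*} (s : Finset ι) (a b : ι → ℝ)
    (ha : ∀ i ∈ s, 0 ≤ a i) (hb : ∀ i ∈ s, 0 ≤ b i)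
    (hac : ∀ i ∈ s, b i = 0 → a i = 0) :
    (∑ i ∈ s, a i) * Real.log ((∑ i ∈ s, a i) / (∑ i ∈ s, b i)) ≤
      ∑ i ∈ s, a i * Real.log (a i / b i) := by
  set A := ∑ i ∈ s, a i with hA
  set Bs := ∑ i ∈ s, b i with hB
  have hA0 : 0 ≤ A := Finset.sum_nonneg ha
  have hB0 : 0 ≤ Bs := Finset.sum_nonneg hb
  rcases eq_or_lt_of_le hB0 with hB0' | hBpos
  · have hball : ∀ i ∈ s, b i = 0 :=
      (Finset.sum_eq_zero_iff_of_nonneg hb).1 hB0'.symm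
    have haall : ∀ i ∈ s, a i = 0 := fun i hi => hac i hi (hball i hi)
    have : A = 0 := Finset.sum_eq_zero haall
    rw [this, zero_mul]
    apply Finset.sum_nonneg
    intro i hi; rw [haall i hi, zero_mul]
  rcases eq_or_lt_of_le hA0 with hA0' | hApos
  · rw [← hA0', zero_mul]
    apply Finset.sum_nonneg
    intro i hi
    rw [(Finset.sum_eq_zero_iff_of_nonneg ha).1 hA0'.symm i hi, zero_mul]
  have key : ∀ i ∈ s, a i * Real.log (A / Bs) + a i - b i * (A / Bs)
      ≤ a i * Real.log (a i / b i) := by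
    intro i hi
    rcases eq_or_lt_of_le (ha i hi) with h0 | hpos
    · rw [← h0]
      have : 0 ≤ b i * (A / Bs) :=
        mul_nonneg (hb i hi) (le_of_lt (div_pos hApos hBpos))
      simp only [zero_mul, zero_add, zero_sub, neg_nonpos]
      exact this
    · have hbpos : 0 < b i := by
        rcases eq_or_lt_of_le (hb i hi) with h0' | h'
        · exact absurd (hac i hi h0'.symm) (ne_of_gt hpos)
        · exact h'
      have hlog2 : Real.log (A/Bs) - Real.log (a i / b i)
          ≤ (A/Bs)/(a i/b i) - 1 :=
        log_sub_log_le (div_pos hApos hBpos) (div_pos hpos hbpos)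
      have hdiv : (A/Bs)/(a i/b i) = (b i * (A/Bs)) / a i := by
        field_simp
      have h2 := mul_le_mul_of_nonneg_left hlog2 (le_of_lt hpos)
      rw [hdiv] at h2
      have h3 : a i * ((b i * (A/Bs))/ a i - 1) = b i * (A/Bs) - a i := by
        field_simp
      rw [h3, mul_sub] at h2
      linarith
  have hsum := Finset.sum_le_sum key
  have h1 : ∑ i ∈ s, (a i * Real.log (A/Bs) + a i - b i * (A/Bs))
      = A * Real.log (A/Bs) + A - Bs * (A/Bs) := by
    rw [Finset.sum_sub_distrib, Finset.sum_add_distrib, ← Finset.sum_mul, ← Finset.sum_mul]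
  rw [h1] at hsum
  have h2 : Bs * (A/Bs) = A := by field_simp
  linarith

lemma rEnt_nonneg (p q : B → ℝ) (hp : ∀ b, 0 ≤ p b) (hq : ∀ b, 0 ≤ q b)
    (hps : ∑ b, p b = 1) (hqs : ∑ b, q b ≤ 1)
    (hac : ∀ b, q b = 0 → p b = 0) : 0 ≤ rEnt p q := by
  have hls := logSum Finset.univ p q (fun b _ => hp b) (fun b _ => hq b) (fun b _ => hac b)
  rw [hps, one_mul] at hls
  refine le_trans ?_ hls
  have hqpos : 0 < ∑ b, q b := by
    rcases eq_or_lt_of_le (Finset.sum_nonneg (fun b (_ : b ∈ Finset.univ) => hq b)) with h0 | h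
    · exfalso
      have hall := (Finset.sum_eq_zero_iff_of_nonneg (fun b _ => hq b)).1 h0.symm
      have : ∑ b, p b = 0 :=
        Finset.sum_eq_zero (fun b hb => hac b (hall b hb))
      rw [hps] at this; norm_num at this
    · exact h
  apply Real.log_nonneg
  rw [le_div_iff₀ hqpos, one_mul]; exact hqs

variable {C : Type*} [Fintype C]

open Classical in
noncomputable def push (T : B → C) (p : B → ℝ) : C → ℝ :=
  fun c => ∑ y ∈ Finset.univ.filter (fun y => T y = c), p y

omit [Fintype C] in
lemma push_nonneg (T : B → C) (p : B → ℝ) (hp : ∀ b, 0 ≤ p b) (c : C) : 0 ≤ push T p c :=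
  Finset.sum_nonneg fun y _ => hp y

lemma sum_push (T : B → C) (p : B → ℝ) : ∑ c, push T p c = ∑ b, p b := by
  classical
  unfold push
  rw [← Finset.sum_fiberwise Finset.univ T p]

omit [Fintype C] in
lemma push_ac (T : B → C) (p q : B → ℝ) (hq : ∀ b, 0 ≤ q b)
    (hac : ∀ b, q b = 0 → p b = 0) :
    ∀ c, push T q c = 0 → push T p c = 0 := by
  classical
  intro c h0
  have hall := (Finset.sum_eq_zero_iff_of_nonneg (fun y _ => hq y)).1 h0
  exact Finset.sum_eq_zero fun y hy => hac y (hall y hy)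

/-- data processing inequality -/
lemma rEnt_push_le (T : B → C) (p q : B → ℝ) (hp : ∀ b, 0 ≤ p b) (hq : ∀ b, 0 ≤ q b)
    (hac : ∀ b, q b = 0 → p b = 0) :
    rEnt (push T p) (push T q) ≤ rEnt p q := by
  classical
  unfold rEnt
  rw [← Finset.sum_fiberwise Finset.univ T (fun b => p b * Real.log (p b / q b))]
  apply Finset.sum_le_sum
  intro c _
  exact logSum _ p q (fun y _ => hp y) (fun y _ => hq y) (fun y _ => hac y)

lemma rEnt_anti (p q q' : B → ℝ) (hp : ∀ b, 0 ≤ p b)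
    (hac : ∀ b, q b = 0 → p b = 0) (hle : ∀ b, q b ≤ q' b) (hq : ∀ b, 0 ≤ q b) :
    rEnt p q' ≤ rEnt p q := by
  apply Finset.sum_le_sum
  intro b _
  rcases eq_or_lt_of_le (hp b) with h0 | hpos
  · rw [← h0]; simp
  · have hqb : 0 < q b := by
      rcases eq_or_lt_of_le (hq b) with h0' | h'
      · exact absurd (hac b h0'.symm) (ne_of_gt hpos)
      · exact h'
    have hq'b : 0 < q' b := lt_of_lt_of_le hqb (hle b)
    apply mul_le_mul_of_nonneg_left _ (le_of_lt hpos)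
    apply Real.log_le_log (div_pos hpos hq'b)
    exact div_le_div_of_nonneg_left (le_of_lt hpos) hqb (hle b)

lemma rEnt_smul (p q : B → ℝ) (K : ℝ) (hK : 0 < K) (hp : ∀ b, 0 ≤ p b)
    (hq : ∀ b, 0 ≤ q b)
    (hac : ∀ b, q b = 0 → p b = 0) (hps : ∑ b, p b = 1) :
    rEnt p (fun b => K * q b) = rEnt p q - Real.log K := by
  unfold rEnt
  have key : ∀ b : B, p b * Real.log (p b / (K * q b))
      = p b * Real.log (p b / q b) - p b * Real.log K := by
    intro b
    rcases eq_or_lt_of_le (hp b) with h0 | hpos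
    · rw [← h0]; ring
    · have hqb : 0 < q b := (hq b).lt_of_ne fun h => hpos.ne' (hac b h.symm)
      have : p b / (K * q b) = (p b / q b) / K := by rw [div_div, mul_comm]
      rw [this, Real.log_div (div_pos hpos hqb).ne' hK.ne', mul_sub]
  simp_rw [key]
  rw [Finset.sum_sub_distrib, ← Finset.sum_mul, hps, one_mul]


section Prod
variable {B1 B2 : Type*} [Fintype B1] [Fintype B2]

/-- superadditivity of relative entropy with a product reference measure -/
lemma rEnt_prod_ge (μ : B1 × B2 → ℝ) (ν1 : B1 → ℝ) (ν2 : B2 → ℝ)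
    (hμ : ∀ b, 0 ≤ μ b) (hν1 : ∀ a, 0 ≤ ν1 a) (hν2 : ∀ b, 0 ≤ ν2 b)
    (hμs : ∑ b, μ b = 1)
    (hac : ∀ b, ν1 b.1 * ν2 b.2 = 0 → μ b = 0) :
    rEnt (fun a => ∑ b, μ (a, b)) ν1 + rEnt (fun b => ∑ a, μ (a, b)) ν2
      ≤ rEnt μ (fun b => ν1 b.1 * ν2 b.2) := by
  classical
  set μ1 : B1 → ℝ := fun a => ∑ b, μ (a, b) with hμ1def
  set μ2 : B2 → ℝ := fun b => ∑ a, μ (a, b) with hμ2def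
  have hμ1 : ∀ a, 0 ≤ μ1 a := fun a => Finset.sum_nonneg fun b _ => hμ (a, b)
  have hμ1s : ∑ a, μ1 a = 1 := by
    rw [← hμs, Fintype.sum_prod_type]
  have hμ1pos : ∀ a b, 0 < μ (a, b) → 0 < μ1 a := by
    intro a b h
    exact lt_of_lt_of_le h (Finset.single_le_sum (fun b' _ => hμ (a, b')) (Finset.mem_univ b))
  have hμ1zero : ∀ a b, μ1 a = 0 → μ (a, b) = 0 := by
    intro a b h
    by_contra hne
    have := hμ1pos a b (lt_of_le_of_ne (hμ (a,b)) (Ne.symm hne))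
    rw [h] at this; exact lt_irrefl 0 this
  -- identity I1
  have I1 : rEnt μ (fun b => ν1 b.1 * ν2 b.2)
      = (∑ x : B1 × B2, μ x * Real.log (μ x / (μ1 x.1 * ν2 x.2)))
        + rEnt μ1 ν1 := by
    unfold rEnt
    have key : ∀ x : B1 × B2, μ x * Real.log (μ x / (ν1 x.1 * ν2 x.2))
        = μ x * Real.log (μ x / (μ1 x.1 * ν2 x.2)) + μ x * Real.log (μ1 x.1 / ν1 x.1) := by
      intro x
      rcases eq_or_lt_of_le (hμ x) with h0 | hpos
      · rw [← h0]; ring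
      · have hμ1x : 0 < μ1 x.1 := hμ1pos x.1 x.2 (by cases x; exact hpos)
        have hν1x : 0 < ν1 x.1 := by
          rcases eq_or_lt_of_le (hν1 x.1) with h | h
          · exact absurd (hac x (by rw [← h, zero_mul])) hpos.ne'
          · exact h
        have hν2x : 0 < ν2 x.2 := by
          rcases eq_or_lt_of_le (hν2 x.2) with h | h
          · exact absurd (hac x (by rw [← h, mul_zero])) hpos.ne'
          · exact h
        rw [← mul_add]
        congr 1
        rw [Real.log_div hpos.ne' (mul_pos hν1x hν2x).ne',
            Real.log_div hpos.ne' (mul_pos hμ1x hν2x).ne',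
            Real.log_div hμ1x.ne' hν1x.ne',
            Real.log_mul hν1x.ne' hν2x.ne', Real.log_mul hμ1x.ne' hν2x.ne']
        ring
    rw [Finset.sum_congr rfl (fun x _ => key x), Finset.sum_add_distrib]
    congr 1
    -- second sum equals rEnt μ1 ν1
    rw [Fintype.sum_prod_type]
    apply Finset.sum_congr rfl
    intro a _
    simp only
    rw [← Finset.sum_mul]
  rw [I1]
  have T1 : rEnt μ2 ν2 ≤ ∑ x : B1 × B2, μ x * Real.log (μ x / (μ1 x.1 * ν2 x.2)) := by
    unfold rEnt
    rw [Fintype.sum_prod_type_right]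
    apply Finset.sum_le_sum
    intro b _
    have hls := logSum Finset.univ (fun a => μ (a, b)) (fun a => μ1 a * ν2 b)
      (fun a _ => hμ (a, b)) (fun a _ => mul_nonneg (hμ1 a) (hν2 b))
      (by
        intro a _ h
        rcases mul_eq_zero.1 h with h1 | h2
        · exact hμ1zero a b h1
        · exact hac (a, b) (by rw [h2, mul_zero]))
    have hsum2 : ∑ a, μ1 a * ν2 b = ν2 b := by
      rw [← Finset.sum_mul, hμ1s, one_mul]
    rw [hsum2] at hls
    exact hls
  linarith

end Prod



lemma fekete (d cc : ℕ → ℝ) (τ : ℕ → ℕ) (hd0 : ∀ n, 1 ≤ n → 0 ≤ d n)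
    (hc : Tendsto (fun n => cc n / n) atTop (𝓝 0))
    (hτ : Tendsto (fun n => (τ n : ℝ) / n) atTop (𝓝 0))
    (hsup : ∀ n m, 1 ≤ n → 1 ≤ m → d n + d m - cc n ≤ d (n + τ n + m)) :
    ∃ L : EReal, 0 ≤ L ∧ Tendsto (fun n => ((d n / n : ℝ) : EReal)) atTop (𝓝 L) := by
  set f : ℕ → EReal := fun n => ((d n / n : ℝ) : EReal) with hf
  -- iterated superadditivity
  have iter : ∀ n, 1 ≤ n → ∀ k m : ℕ, 1 ≤ m →
      (k : ℝ) * (d n - cc n) + d m ≤ d (k * (n + τ n) + m) := by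
    intro n hn k
    induction k with
    | zero => intro m hm; simp
    | succ k ih =>
      intro m hm
      have h1 : (k + 1) * (n + τ n) + m = n + τ n + (k * (n + τ n) + m) := by ring
      rw [h1]
      have h2 := hsup n (k * (n + τ n) + m) hn (le_trans hm (Nat.le_add_left _ _))
      have h3 := ih m hm
      push_cast
      linarith
  -- liminf is nonnegative
  have hev0 : ∀ᶠ N in atTop, (0 : EReal) ≤ f N := by
    filter_upwards [eventually_ge_atTop 1] with N hN
    have : (0:ℝ) ≤ d N / N := div_nonneg (hd0 N hN) (Nat.cast_nonneg N)
    exact EReal.coe_nonneg.2 this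
  have hlim0 : (0 : EReal) ≤ liminf f atTop := by
    calc (0 : EReal) = liminf (fun _ : ℕ => (0:EReal)) atTop := (liminf_const 0).symm
    _ ≤ liminf f atTop := liminf_le_liminf hev0
  -- main lower bound on liminf
  have hlow : ∀ n, 1 ≤ n → (((d n - cc n) / ((n : ℝ) + τ n) : ℝ) : EReal) ≤ liminf f atTop := by
    intro n hn
    set s : ℕ := n + τ n with hs
    have hs1 : 1 ≤ s := le_trans hn (Nat.le_add_right _ _)
    have hsR : (0:ℝ) < s := by exact_mod_cast hs1
    set r : ℝ := d n - cc n with hr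
    have hcast : ((n : ℝ) + τ n) = (s : ℝ) := by rw [hs]; push_cast; ring
    rw [hcast]
    rcases le_or_gt r 0 with hrneg | hrpos
    · refine le_trans ?_ hlim0
      have : r / (s:ℝ) ≤ 0 := div_nonpos_iff.2 (Or.inr ⟨hrneg, le_of_lt hsR⟩)
      exact EReal.coe_nonpos.2 this
    · have hev : ∀ᶠ N : ℕ in atTop, ((r / (s:ℝ) - r / (N:ℝ) : ℝ) : EReal) ≤ f N := by
        filter_upwards [eventually_ge_atTop 1] with N hN
        set k : ℕ := (N - 1) / s with hk
        set m : ℕ := N - k * s with hm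
        have hksle : k * s ≤ N - 1 := Nat.div_mul_le_self _ _
        have hm1 : 1 ≤ m := by omega
        have hNeq : k * s + m = N := by omega
        have hiter := iter n hn k m hm1
        rw [hNeq] at hiter
        have hdm : 0 ≤ d m := hd0 m hm1
        have hdN : (k : ℝ) * r ≤ d N := by rw [hr]; linarith
        have hNlt : N - 1 < k * s + s := by
          rw [hk]; exact Nat.lt_div_mul_add (by omega)
        have hNle : (N : ℝ) ≤ (k : ℝ) * s + s := by exact_mod_cast by omega
        have hkge : ((N : ℝ) - s) / s ≤ (k : ℝ) := by
          rw [div_le_iff₀ hsR]; linarith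
        have hNpos : (0:ℝ) < N := by exact_mod_cast hN
        have hchain : r / s - r / N ≤ d N / N := by
          have heq : r / (s:ℝ) - r / N = ((N:ℝ) - s)/s * r / N := by
            field_simp
          rw [heq]
          calc ((N:ℝ)-s)/s*r/N ≤ (k:ℝ)*r/N := by
                have := mul_le_mul_of_nonneg_right hkge (le_of_lt hrpos)
                gcongr
          _ ≤ d N / N := by gcongr
        exact EReal.coe_le_coe_iff.2 hchain
      have hg : Tendsto (fun N : ℕ => ((r/s - r/N : ℝ) : EReal)) atTop
          (𝓝 ((r/(s:ℝ) : ℝ) : EReal)) := by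
        rw [EReal.tendsto_coe]
        have h2 : Tendsto (fun N : ℕ => r / (N:ℝ)) atTop (𝓝 0) :=
          tendsto_const_div_atTop_nhds_zero_nat r
        simpa using tendsto_const_nhds.sub h2
      calc ((r/(s:ℝ) : ℝ) : EReal)
          = liminf (fun N : ℕ => ((r/s - r/N : ℝ) : EReal)) atTop := hg.liminf_eq.symm
        _ ≤ liminf f atTop := liminf_le_liminf hev
  -- limsup ≤ liminf
  have hmain : limsup f atTop ≤ liminf f atTop := by
    by_contra hcon
    push_neg at hcon
    obtain ⟨x, hx1, hx2⟩ := EReal.exists_between_coe_real hcon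
    have hxle : (x : EReal) ≤ liminf f atTop := by
      -- for every ε ∈ (0,1], liminf ≥ (x - ε)/(1 + ε)
      have hstep : ∀ ε : ℝ, 0 < ε → (((x - ε)/(1 + ε) : ℝ) : EReal) ≤ liminf f atTop := by
        intro ε hε
        have hfreq : ∃ᶠ N in atTop, (x : EReal) < f N := frequently_lt_of_lt_limsup (by
          isBoundedDefault) hx2
        have hevε : ∀ᶠ N in atTop, cc N / N < ε ∧ (τ N : ℝ) / N < ε ∧ 1 ≤ N := by
          filter_upwards [hc.eventually (gt_mem_nhds hε), hτ.eventually (gt_mem_nhds hε),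
            eventually_ge_atTop 1] with N h1 h2 h3
          exact ⟨h1, h2, h3⟩
        obtain ⟨N, hN1, hN2, hN3, hN4⟩ := (hfreq.and_eventually hevε).exists
        have hNpos : (0:ℝ) < N := by exact_mod_cast hN4
        have hdx : x < d N / N := EReal.coe_lt_coe_iff.1 hN1
        rcases le_or_gt (x - ε) 0 with hneg | hpos
        · refine le_trans ?_ hlim0
          have : (x - ε)/(1+ε) ≤ 0 := div_nonpos_iff.2 (Or.inr ⟨hneg, by linarith⟩)
          exact EReal.coe_nonpos.2 this
        · refine le_trans ?_ (hlow N hN4)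
          apply EReal.coe_le_coe_iff.2
          have hccN : cc N < ε * N := by
            rw [div_lt_iff₀ hNpos] at hN2; linarith
          have hτN : (τ N : ℝ) < ε * N := by
            rw [div_lt_iff₀ hNpos] at hN3; linarith
          have hdN : x * N < d N := by
            rw [lt_div_iff₀ hNpos] at hdx; linarith
          have hnum : (x - ε) * N ≤ d N - cc N := by nlinarith
          have hden : (N:ℝ) + τ N ≤ (1 + ε) * N := by nlinarith
          have h0den : (0:ℝ) < (N:ℝ) + τ N := by positivity
          calc (x - ε)/(1 + ε) = (x - ε) * N / ((1 + ε) * N) := by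
                rw [mul_div_mul_right _ _ hNpos.ne']
            _ ≤ (d N - cc N) / ((N:ℝ) + τ N) :=
                div_le_div₀ (by nlinarith) hnum h0den hden
      -- take ε → 0
      have hseq : Tendsto (fun k : ℕ => (((x - 1/(k+1))/(1 + 1/(k+1)) : ℝ) : EReal)) atTop
          (𝓝 ((x : ℝ) : EReal)) := by
        rw [EReal.tendsto_coe]
        have h1 : Tendsto (fun k : ℕ => 1/((k:ℝ)+1)) atTop (𝓝 0) :=
          tendsto_one_div_add_atTop_nhds_zero_nat
        have h2 : Tendsto (fun k : ℕ => x - 1/((k:ℝ)+1)) atTop (𝓝 (x - 0)) :=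
          tendsto_const_nhds.sub h1
        have h3 : Tendsto (fun k : ℕ => 1 + 1/((k:ℝ)+1)) atTop (𝓝 (1 + 0)) :=
          tendsto_const_nhds.add h1
        have := h2.div h3 (by norm_num)
        rw [show (x - 0) / (1 + 0) = x by norm_num] at this; exact this
      apply le_of_tendsto hseq
      filter_upwards with k
      exact hstep (1/(k+1)) (by positivity)
    exact absurd (lt_of_le_of_lt hxle hx1) (lt_irrefl _)
  have heq : liminf f atTop = limsup f atTop := le_antisymm (liminf_le_limsup) hmain
  refine ⟨limsup f atTop, ?_, ?_⟩
  · rw [← heq]; exact hlim0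
  · exact tendsto_of_liminf_eq_limsup heq rfl




section Meas

variable {A : Type*} [Fintype A] [MeasurableSpace A] [MeasurableSingletonClass A]

/-- the projection onto the first `n` coordinates -/
def proj (A : Type*) (n : ℕ) : (ℕ → A) → (Fin n → A) := fun x i => x (i : ℕ)

lemma measurable_proj (n : ℕ) : Measurable (proj A n) :=
  measurable_pi_lambda _ (fun _ => measurable_pi_apply _)

lemma meas_finset {B : Type*} [MeasurableSpace B] [MeasurableSingletonClass B]
    (μ : Measure B) (s : Finset B) : μ ↑s = ∑ b ∈ s, μ {b} := by
  have h1 : (↑s : Set B) = ⋃ b ∈ s, {b} := by ext x; simp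
  rw [h1, measure_biUnion_finset]
  · intro x _ y _ hxy
    simp [Function.onFun, Set.disjoint_singleton, hxy]
  · exact fun b _ => measurableSet_singleton b

variable (P : Measure (ℕ → A)) [IsProbabilityMeasure P]

lemma map_proj_apply (n : ℕ) (s : Set (Fin n → A)) (hs : MeasurableSet s) :
    (P.map (proj A n)) s = P ((proj A n) ⁻¹' s) :=
  Measure.map_apply (measurable_proj n) hs

lemma map_proj_singleton (n : ℕ) (b : Fin n → A) :
    (P.map (proj A n)) {b} = P {x | ∀ i : Fin n, x (i : ℕ) = b i} := by
  rw [map_proj_apply P n _ (measurableSet_singleton b)]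
  congr 1
  ext x
  simp [proj, funext_iff]

/-- mass function of the `n`-th marginal -/
noncomputable def pf (n : ℕ) : (Fin n → A) → ℝ := fun b => ((P.map (proj A n)) {b}).toReal

lemma pf_nonneg (n : ℕ) (b : Fin n → A) : 0 ≤ pf P n b := ENNReal.toReal_nonneg

lemma sum_pf (n : ℕ) : ∑ b, pf P n b = 1 := by
  have : IsProbabilityMeasure (P.map (proj A n)) :=
    Measure.isProbabilityMeasure_map (measurable_proj n).aemeasurable
  have h1 : ∑ b, (P.map (proj A n)) {b} = 1 := by
    rw [← meas_finset (P.map (proj A n)) Finset.univ]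
    simp [measure_univ]
  unfold pf
  rw [← ENNReal.toReal_sum (fun b _ => measure_ne_top _ _), h1, ENNReal.toReal_one]

/-- pushforward of a mass function corresponds to measure of preimage -/
lemma push_mass {C : Type*} [Fintype C] (n : ℕ) (T : (Fin n → A) → C) (c : C) :
    push T (pf P n) c = ((P.map (proj A n)) (T ⁻¹' {c})).toReal := by
  classical
  have hset : T ⁻¹' {c} = ↑(Finset.univ.filter fun b => T b = c) := by ext y; simp
  rw [hset, meas_finset, ENNReal.toReal_sum (fun b _ => measure_ne_top _ _)]
  rfl

/-- pushforward along a coordinate-selection map -/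
lemma push_restrict_mass (n N : ℕ) (g : Fin n → Fin N) (a : Fin n → A) :
    push (fun (y : Fin N → A) (i : Fin n) => y (g i)) (pf P N) a
      = (P {x | ∀ i : Fin n, x ((g i : ℕ)) = a i}).toReal := by
  rw [push_mass]
  congr 1
  rw [map_proj_apply P N _ ((Set.toFinite _).measurableSet.preimage ?_)]
  · congr 1
    ext x
    simp [proj, funext_iff]
  · exact measurable_of_finite _

lemma push_pair_mass (n m N : ℕ) (g : Fin n → Fin N) (h : Fin m → Fin N)
    (a : Fin n → A) (b : Fin m → A) :
    push (fun (y : Fin N → A) => ((fun i => y (g i)), (fun j => y (h j)))) (pf P N) (a, b)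
      = (P {x | (∀ i : Fin n, x ((g i : ℕ)) = a i) ∧ (∀ j : Fin m, x ((h j : ℕ)) = b j)}).toReal := by
  rw [push_mass]
  congr 1
  rw [map_proj_apply P N _ ((Set.toFinite _).measurableSet.preimage (measurable_of_finite _))]
  congr 1
  ext x
  simp [proj, Prod.ext_iff, funext_iff]

/-- shift invariance transports distant cylinders to initial ones -/
lemma shift_pres (hP : MeasurePreserving (fun (x : ℕ → A) k => x (k + 1)) P P) (k : ℕ) :
    MeasurePreserving (fun (x : ℕ → A) i => x (i + k)) P P := by
  induction k with
  | zero => exact MeasurePreserving.id P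
  | succ k ih =>
    have h := ih.comp hP
    have heq : ((fun (x : ℕ → A) i => x (i + k)) ∘ (fun x j => x (j + 1)))
        = fun (x : ℕ → A) i => x (i + (k + 1)) := by
      funext x i
      simp [Function.comp]
      ring_nf
    rwa [heq] at h

lemma shift_cylinder (hP : MeasurePreserving (fun (x : ℕ → A) k => x (k + 1)) P P)
    (k m : ℕ) (b : Fin m → A) :
    P {x | ∀ j : Fin m, x (k + (j : ℕ)) = b j} = (P.map (proj A m)) {b} := by
  rw [map_proj_singleton]
  have hset : {x : ℕ → A | ∀ j : Fin m, x (k + (j : ℕ)) = b j}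
      = (fun (x : ℕ → A) i => x (i + k)) ⁻¹' {x | ∀ j : Fin m, x (j : ℕ) = b j} := by
    ext x
    simp only [Set.mem_preimage, Set.mem_setOf_eq]
    constructor
    · intro hx j; rw [Nat.add_comm]; exact hx j
    · intro hx j; rw [Nat.add_comm]; exact hx j
  rw [hset]
  apply (shift_pres P hP k).measure_preimage
  have : {x : ℕ → A | ∀ j : Fin m, x (j : ℕ) = b j} = (proj A m) ⁻¹' {b} := by
    ext x; simp [proj, funext_iff]
  rw [this]
  exact ((measurableSet_singleton b).preimage (measurable_proj m)).nullMeasurableSet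

end Meas



lemma push_fst {B C1 C2 : Type*} [Fintype B] [Fintype C1] [Fintype C2]
    (T : B → C1 × C2) (p : B → ℝ) (a : C1) :
    ∑ b2, push T p (a, b2) = push (fun y => (T y).1) p a := by
  classical
  unfold push
  rw [← Finset.sum_fiberwise (Finset.univ.filter fun y => (T y).1 = a) (fun y => (T y).2) p]
  apply Finset.sum_congr rfl
  intro c2 _
  rw [Finset.filter_filter]
  apply Finset.sum_congr _ (fun _ _ => rfl)
  ext y
  simp [Prod.ext_iff, and_comm]

lemma push_snd {B C1 C2 : Type*} [Fintype B] [Fintype C1] [Fintype C2]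
    (T : B → C1 × C2) (p : B → ℝ) (b : C2) :
    ∑ a, push T p (a, b) = push (fun y => (T y).2) p b := by
  classical
  unfold push
  rw [← Finset.sum_fiberwise (Finset.univ.filter fun y => (T y).2 = b) (fun y => (T y).1) p]
  apply Finset.sum_congr rfl
  intro c1 _
  rw [Finset.filter_filter]
  apply Finset.sum_congr _ (fun _ _ => rfl)
  ext y
  simp [Prod.ext_iff, and_comm]


end SRE

open SRE

open Classical in
/-- The relative entropy (Kullback–Leibler divergence) `D(p‖q) = Σ_b p(b) log(p(b)/q(b))`
of two measures on a finite type, with the conventions `0 · log(0/q) = 0` and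
`D(p‖q) = ∞` when `p` is not absolutely continuous with respect to `q`. -/
noncomputable def finRelEnt {B : Type*} [Fintype B] [MeasurableSpace B]
    (p q : Measure B) : EReal :=
  if ∀ b : B, q {b} = 0 → p {b} = 0 then
    ((∑ b : B, (p {b}).toReal * Real.log ((p {b}).toReal / (q {b}).toReal) : ℝ) : EReal)
  else ⊤

/-- **Existence of the specific relative entropy under upper decoupling.**
If `ℙ` and `ℚ` are shift-invariant probability measures on `𝒜^ℕ` (with `𝒜` a finite
nonempty alphabet) and `ℚ` satisfies the upper-decoupling condition with `o(n)` constants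
`c_n` and gaps `τ_n`, then the specific relative entropy `lim_n (1/n) D(ℙ_n ‖ ℚ_n)`
exists in `[0, ∞]`, where `ℙ_n`, `ℚ_n` are the marginals on `𝒜^n`. -/
theorem specific_relative_entropy_exists
    {A : Type*} [Fintype A] [Nonempty A]
    [MeasurableSpace A] [MeasurableSingletonClass A]
    (P Q : Measure (ℕ → A)) [IsProbabilityMeasure P] [IsProbabilityMeasure Q]
    (hP : MeasurePreserving (fun x k => x (k + 1)) P P)
    (hQ : MeasurePreserving (fun x k => x (k + 1)) Q Q)
    (c : ℕ → ℝ) (hc_nonneg : ∀ n, 1 ≤ n → 0 ≤ c n) (τ : ℕ → ℕ)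
    (hc : Filter.Tendsto (fun n => c n / n) Filter.atTop (𝓝 0))
    (hτ : Filter.Tendsto (fun n => (τ n : ℝ) / n) Filter.atTop (𝓝 0))
    (hdec : ∀ (n m : ℕ), 1 ≤ n → 1 ≤ m → ∀ (a : Fin n → A) (b : Fin m → A),
      Q {x | (∀ i : Fin n, x (i : ℕ) = a i) ∧ (∀ j : Fin m, x (n + τ n + (j : ℕ)) = b j)}
        ≤ ENNReal.ofReal (Real.exp (c n)) * Q {x | ∀ i : Fin n, x (i : ℕ) = a i}
          * Q {x | ∀ j : Fin m, x (n + τ n + (j : ℕ)) = b j}) :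
    ∃ L : EReal, 0 ≤ L ∧
      Filter.Tendsto
        (fun n : ℕ =>
          finRelEnt (P.map (fun x (i : Fin n) => x (i : ℕ)))
              (Q.map (fun x (i : Fin n) => x (i : ℕ))) / (n : EReal))
        Filter.atTop (𝓝 L) := by

  classical
  have hgoal : (fun n : ℕ =>
      finRelEnt (P.map (fun x (i : Fin n) => x (i : ℕ)))
        (Q.map (fun x (i : Fin n) => x (i : ℕ))) / (n : EReal))
      = fun n : ℕ => finRelEnt (P.map (proj A n)) (Q.map (proj A n)) / (n : EReal) := rfl
  rw [hgoal]
  have hNcast : ∀ N : ℕ, 1 ≤ N → ((N : EReal) ≠ ⊤ ∧ (0 : EReal) < (N : EReal)) := by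
    intro N hN
    rw [← EReal.coe_coe_eq_natCast]
    constructor
    · exact EReal.coe_ne_top _
    · exact EReal.coe_pos.2 (by exact_mod_cast hN)
  by_cases hAC : ∀ n : ℕ, ∀ b : Fin n → A, (Q.map (proj A n)) {b} = 0 → (P.map (proj A n)) {b} = 0
  · -- absolutely continuous case
    set d : ℕ → ℝ := fun n => rEnt (pf P n) (pf Q n) with hd
    have hACf : ∀ n (y : Fin n → A), pf Q n y = 0 → pf P n y = 0 := by
      intro n y h
      haveI : IsProbabilityMeasure (Q.map (proj A n)) :=
        Measure.isProbabilityMeasure_map (measurable_proj n).aemeasurable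
      have hq : (Q.map (proj A n)) {y} = 0 := by
        rcases (ENNReal.toReal_eq_zero_iff _).1 h with h' | h'
        · exact h'
        · exact absurd h' (measure_ne_top _ _)
      unfold pf
      rw [hAC n y hq, ENNReal.toReal_zero]
    have hd0 : ∀ n, 1 ≤ n → 0 ≤ d n := fun n _ =>
      rEnt_nonneg _ _ (pf_nonneg P n) (pf_nonneg Q n) (sum_pf P n)
        (le_of_eq (sum_pf Q n)) (hACf n)
    have hsup : ∀ n m, 1 ≤ n → 1 ≤ m → d n + d m - c n ≤ d (n + τ n + m) := by
      intro n m hn hm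
      set N : ℕ := n + τ n + m with hN
      have hgm : ∀ i : Fin n, (i : ℕ) < N := fun i => by omega
      have hhm : ∀ j : Fin m, n + τ n + (j : ℕ) < N := fun j => by omega
      set g : Fin n → Fin N := fun i => ⟨(i : ℕ), hgm i⟩ with hg
      set h : Fin m → Fin N := fun j => ⟨n + τ n + (j : ℕ), hhm j⟩ with hh
      set T : (Fin N → A) → (Fin n → A) × (Fin m → A) :=
        fun y => ((fun i => y (g i)), (fun j => y (h j))) with hT
      set Pj := push T (pf P N) with hPjdef
      set Qj := push T (pf Q N) with hQjdef
      set ρ : (Fin n → A) × (Fin m → A) → ℝ :=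
        fun cp => pf Q n cp.1 * pf Q m cp.2 with hρ
      have hPj_nonneg : ∀ cp, 0 ≤ Pj cp := fun cp => push_nonneg T _ (pf_nonneg P N) cp
      have hQj_nonneg : ∀ cp, 0 ≤ Qj cp := fun cp => push_nonneg T _ (pf_nonneg Q N) cp
      have hρ_nonneg : ∀ cp, 0 ≤ ρ cp := fun cp =>
        mul_nonneg (pf_nonneg Q n _) (pf_nonneg Q m _)
      have hacPjQj : ∀ cp, Qj cp = 0 → Pj cp = 0 :=
        push_ac T _ _ (pf_nonneg Q N) (hACf N)
      have hPjsum : ∑ cp, Pj cp = 1 := by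
        rw [hPjdef, sum_push, sum_pf]
      -- value of Qj and decoupling bound
      have hQj_le : ∀ cp, Qj cp ≤ Real.exp (c n) * ρ cp := by
        rintro ⟨a, b⟩
        have h1 : Qj (a, b) = (Q {x | (∀ i : Fin n, x (i : ℕ) = a i) ∧
            (∀ j : Fin m, x (n + τ n + (j : ℕ)) = b j)}).toReal := by
          rw [hQjdef, hT]
          exact push_pair_mass Q n m N g h a b
        have h2 := hdec n m hn hm a b
        have h3 : (ENNReal.ofReal (Real.exp (c n)) * Q {x | ∀ i : Fin n, x (i : ℕ) = a i}
            * Q {x | ∀ j : Fin m, x (n + τ n + (j : ℕ)) = b j}).toReal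
            = Real.exp (c n) * pf Q n a * pf Q m b := by
          rw [ENNReal.toReal_mul, ENNReal.toReal_mul,
            ENNReal.toReal_ofReal (Real.exp_nonneg _)]
          congr 1
          · congr 1
            rw [← map_proj_singleton Q n a]; rfl
          · rw [shift_cylinder Q hQ (n + τ n) m b]; rfl
        rw [h1, hρ]
        calc (Q _).toReal ≤ _ := ENNReal.toReal_mono (by finiteness) h2
          _ = Real.exp (c n) * pf Q n a * pf Q m b := h3
          _ = Real.exp (c n) * (pf Q n a * pf Q m b) := by ring
      have hacPjρ : ∀ cp, ρ cp = 0 → Pj cp = 0 := by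
        intro cp h0
        apply hacPjQj
        have := hQj_le cp
        rw [h0, mul_zero] at this
        exact le_antisymm this (hQj_nonneg cp)
      -- marginals
      have hfst : (fun a => ∑ b, Pj (a, b)) = pf P n := by
        funext a
        rw [hPjdef, hT, push_fst]
        have := push_restrict_mass P n N g a
        simp only at this ⊢
        rw [this, pf, map_proj_singleton]
      have hsnd : (fun b => ∑ a, Pj (a, b)) = pf P m := by
        funext b
        rw [hPjdef, hT, push_snd]
        have := push_restrict_mass P m N h b
        simp only at this ⊢
        rw [this]
        show (P {x | ∀ j : Fin m, x (n + τ n + (j:ℕ)) = b j}).toReal = _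
        rw [shift_cylinder P hP (n + τ n) m b]; rfl
      -- the chain
      have step1 : rEnt Pj Qj ≤ d N :=
        rEnt_push_le T _ _ (pf_nonneg P N) (pf_nonneg Q N) (hACf N)
      have step2 : rEnt Pj (fun cp => Real.exp (c n) * ρ cp) ≤ rEnt Pj Qj :=
        rEnt_anti Pj Qj _ hPj_nonneg hacPjQj hQj_le hQj_nonneg
      have step3 : rEnt Pj (fun cp => Real.exp (c n) * ρ cp) = rEnt Pj ρ - c n := by
        rw [rEnt_smul Pj ρ (Real.exp (c n)) (Real.exp_pos _) hPj_nonneg hρ_nonneg hacPjρ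
          hPjsum, Real.log_exp]
      have step4 : d n + d m ≤ rEnt Pj ρ := by
        have := rEnt_prod_ge Pj (pf Q n) (pf Q m) hPj_nonneg (pf_nonneg Q n) (pf_nonneg Q m)
          hPjsum (by intro cp hcp; exact hacPjρ cp hcp)
        rw [hfst, hsnd] at this
        exact this
      linarith
    obtain ⟨L, hL0, hLt⟩ := fekete d c τ hd0 hc hτ hsup
    refine ⟨L, hL0, ?_⟩
    apply hLt.congr'
    filter_upwards [eventually_ge_atTop 1] with n hn
    have h1 : finRelEnt (P.map (proj A n)) (Q.map (proj A n)) = ((d n : ℝ) : EReal) := by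
      unfold finRelEnt
      rw [if_pos (hAC n)]
      rfl
    rw [h1, ← EReal.coe_coe_eq_natCast, ← EReal.coe_div]
  · -- singular case: eventually ⊤
    push_neg at hAC
    obtain ⟨n₀, b₀, hQ0, hP0⟩ := hAC
    have hfail : ∀ N, n₀ ≤ N →
        ¬ (∀ y : Fin N → A, (Q.map (proj A N)) {y} = 0 → (P.map (proj A N)) {y} = 0) := by
      intro N hN hcon
      have hRm : ∀ i : Fin n₀, (i : ℕ) < N := fun i => lt_of_lt_of_le i.2 hN
      set R : (Fin N → A) → (Fin n₀ → A) := fun y i => y ⟨(i : ℕ), hRm i⟩ with hR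
      have hpre : (proj A N) ⁻¹' (R ⁻¹' {b₀}) = (proj A n₀) ⁻¹' {b₀} := by
        ext x
        simp [proj, hR, funext_iff]
      have hmeasR : MeasurableSet (R ⁻¹' {b₀}) :=
        (Set.toFinite _).measurableSet
      have hPN : (P.map (proj A N)) (R ⁻¹' {b₀}) = (P.map (proj A n₀)) {b₀} := by
        rw [map_proj_apply P N _ hmeasR,
          map_proj_apply P n₀ _ (measurableSet_singleton _), hpre]
      have hQN : (Q.map (proj A N)) (R ⁻¹' {b₀}) = 0 := by
        rw [map_proj_apply Q N _ hmeasR, hpre,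
          ← map_proj_apply Q n₀ _ (measurableSet_singleton _), hQ0]
      -- each singleton in the fiber has Q-measure 0, hence P-measure 0
      have hPzero : ∀ y : Fin N → A, R y = b₀ → (P.map (proj A N)) {y} = 0 := by
        intro y hy
        apply hcon
        apply le_antisymm _ zero_le
        rw [← hQN]
        apply measure_mono
        intro z hz
        rw [Set.mem_singleton_iff] at hz
        subst hz
        exact hy
      -- but the fiber has positive P-measure
      apply hP0
      rw [← hPN]
      have hset : R ⁻¹' {b₀} = ↑(Finset.univ.filter fun y => R y = b₀) := by
        ext y; simp
      rw [hset, meas_finset]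
      apply Finset.sum_eq_zero
      intro y hy
      exact hPzero y (by simpa using hy)
    refine ⟨⊤, le_top, ?_⟩
    apply Filter.Tendsto.congr' _ (tendsto_const_nhds : Tendsto (fun _ : ℕ => (⊤:EReal)) atTop (𝓝 ⊤))
    filter_upwards [eventually_ge_atTop (max n₀ 1)] with N hN
    have h1 : finRelEnt (P.map (proj A N)) (Q.map (proj A N)) = ⊤ := by
      unfold finRelEnt
      rw [if_neg (hfail N (le_trans (le_max_left _ _) hN))]
    rw [h1]
    obtain ⟨hne, hpos⟩ := hNcast N (le_trans (le_max_right _ _) hN)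
    rw [EReal.top_div_of_pos_ne_top hpos hne]
end

section
/- Let (X, 𝓕, μ, T) be a measure-preserving dynamical system with μ a probability measure. Let (f_n)_{n∈ℕ} be measurable real-valued functions, let ρ_1 be a nonnegative measurable function that is finite μ-almost surely, and suppose that for every m ∈ ℕ, μ-almost surely f_{1+m} ≤ f_1 + ρ_1 + f_m ∘ T. Then the extended-real-valued function f(x) := liminf_{n→∞} f_n(x)/n satisfies f ∘ T = f μ-almost surely. -/
open Filter Topology MeasureTheory

/-- Auxiliary liminf comparison: if `b m ≥ a (1+m) - c` for all `m ≥ 1`, then the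
EReal-valued liminf of `a n / n` is at most that of `b n / n`. -/
lemma liminf_aux_le (a b : ℕ → ℝ) (c : ℝ)
    (h : ∀ m : ℕ, 1 ≤ m → a (1 + m) - c ≤ b m) :
    Filter.liminf (fun n : ℕ => ((a n : EReal) / (n : EReal))) Filter.atTop
      ≤ Filter.liminf (fun n : ℕ => ((b n : EReal) / (n : EReal))) Filter.atTop := by
  rw [← EReal.ge_of_forall_gt_iff_ge]
  intro r hr
  have h1 : ∀ᶠ n : ℕ in atTop, (r : EReal) < (a n : EReal) / (n : EReal) :=
    Filter.eventually_lt_of_lt_liminf hr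
  obtain ⟨N, hN⟩ := Filter.eventually_atTop.1 h1
  have h2 : ∀ᶠ m : ℕ in atTop,
      ((r + (r - c) / m : ℝ) : EReal) ≤ (b m : EReal) / (m : EReal) := by
    filter_upwards [Filter.eventually_ge_atTop (max 1 N)] with m hm
    have hm1 : 1 ≤ m := le_trans (le_max_left _ _) hm
    have hmN : N ≤ 1 + m := le_trans (le_trans (le_max_right _ _) hm) (by omega)
    have hlt : (r : EReal) < (a (1 + m) : EReal) / ((1 + m : ℕ) : EReal) := hN _ hmN
    rw [← EReal.coe_coe_eq_natCast, ← EReal.coe_div, EReal.coe_lt_coe_iff] at hlt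
    have hmpos : (0 : ℝ) < (m : ℝ) := by exact_mod_cast hm1
    have h1m : (0 : ℝ) < ((1 + m : ℕ) : ℝ) := by positivity
    have ha : r * ((1 + m : ℕ) : ℝ) < a (1 + m) := by
      rwa [lt_div_iff₀ h1m] at hlt
    have hb : r + (r - c) / m ≤ b m / m := by
      rw [le_div_iff₀ hmpos, add_mul, div_mul_cancel₀ _ hmpos.ne']
      have : r * ((1 + m : ℕ) : ℝ) - c ≤ b m := le_trans (by linarith [h m hm1]) (h m hm1)
      push_cast at this ⊢
      nlinarith [h m hm1, ha]
    rw [← EReal.coe_coe_eq_natCast, ← EReal.coe_div, EReal.coe_le_coe_iff]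
    exact hb
  have h3 : Filter.liminf (fun m : ℕ => ((r + (r - c) / m : ℝ) : EReal)) Filter.atTop
      = (r : EReal) := by
    have ht : Filter.Tendsto (fun m : ℕ => ((r + (r - c) / m : ℝ) : EReal))
        Filter.atTop (nhds (r : EReal)) := by
      rw [EReal.tendsto_coe]
      have h0 : Filter.Tendsto (fun m : ℕ => (r - c) / (m : ℝ)) Filter.atTop (nhds 0) :=
        tendsto_const_div_atTop_nhds_zero_nat (r - c)
      simpa using tendsto_const_nhds.add h0
    exact ht.liminf_eq
  calc (r : EReal) = _ := h3.symm
    _ ≤ _ := Filter.liminf_le_liminf h2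

/-- **Almost sure `T`-invariance of the liminf.**  If `(f_n)` are measurable real-valued
functions on a measure-preserving dynamical system, `ρ₁` is a nonnegative measurable
function that is finite μ-a.s., and for every `m ≥ 1` one has
`f_{1+m} ≤ f_1 + ρ₁ + f_m ∘ T` μ-a.s., then `f(x) := liminf_n f_n(x)/n` (valued in the
extended reals) satisfies `f ∘ T = f` μ-almost surely. -/
theorem liminf_T_invariant
    {X : Type*} [MeasurableSpace X] (μ : Measure X) [IsProbabilityMeasure μ]
    (T : X → X) (hT : MeasurePreserving T μ μ)
    (f : ℕ → X → ℝ) (hf_meas : ∀ n, 1 ≤ n → Measurable (f n))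
    (ρ₁ : X → ENNReal) (hρ₁_meas : Measurable ρ₁) (hρ₁_fin : ∀ᵐ x ∂μ, ρ₁ x < ⊤)
    (hsub : ∀ m : ℕ, 1 ≤ m → ∀ᵐ x ∂μ,
      ((f (1 + m) x : EReal)) ≤ (f 1 x : EReal) + (ρ₁ x : EReal) + (f m (T x) : EReal)) :
    ∀ᵐ x ∂μ,
      Filter.liminf (fun n : ℕ => ((f n (T x) : EReal) / (n : EReal))) Filter.atTop
        = Filter.liminf (fun n : ℕ => ((f n x : EReal) / (n : EReal))) Filter.atTop := by
  set F : X → EReal :=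
    fun x => Filter.liminf (fun n : ℕ => ((f n x : EReal) / (n : EReal))) Filter.atTop with hFdef
  -- measurability of F
  have hFmeas : Measurable F := by
    have hF2 : F = fun x =>
        Filter.liminf (fun n : ℕ => ((f (n + 1) x / ((n + 1 : ℕ) : ℝ) : ℝ) : EReal))
          Filter.atTop := by
      funext x
      rw [hFdef]
      dsimp only
      rw [← Filter.liminf_nat_add (fun n : ℕ => ((f n x : EReal) / (n : EReal))) 1]
      rfl
    rw [hF2]
    exact Measurable.liminf fun n =>
      measurable_coe_real_ereal.comp ((hf_meas (n + 1) (by omega)).div_const _)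
  -- a.s. F x ≤ F (T x)
  have hle : ∀ᵐ x ∂μ, F x ≤ F (T x) := by
    have hs : ∀ᵐ x ∂μ, ∀ m : ℕ, 1 ≤ m →
        ((f (1 + m) x : EReal)) ≤ (f 1 x : EReal) + (ρ₁ x : EReal) + (f m (T x) : EReal) := by
      rw [MeasureTheory.ae_all_iff]
      intro m
      by_cases hm : 1 ≤ m
      · filter_upwards [hsub m hm] with x hx _ using hx
      · filter_upwards with x hx; omega
    filter_upwards [hs, hρ₁_fin] with x hx hρ
    have hρ' : ((ρ₁ x : EReal)) = (((ρ₁ x).toReal : ℝ) : EReal) := by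
      rw [← EReal.toReal_coe_ennreal]
      refine (EReal.coe_toReal ?_ ?_).symm
      · exact fun htop => hρ.ne (EReal.coe_ennreal_eq_top_iff.1 htop)
      · exact EReal.coe_ennreal_ne_bot _
    have hreal : ∀ m : ℕ, 1 ≤ m →
        f (1 + m) x - (f 1 x + (ρ₁ x).toReal) ≤ f m (T x) := by
      intro m hm
      have := hx m hm
      rw [hρ'] at this
      rw [← EReal.coe_add, ← EReal.coe_add, EReal.coe_le_coe_iff] at this
      linarith
    exact liminf_aux_le (fun n => f n x) (fun n => f n (T x)) _ hreal
  -- sublevel sets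
  have hA : ∀ q : ℚ, MeasurableSet {x | F x ≤ ((q : ℝ) : EReal)} :=
    fun q => measurableSet_le hFmeas measurable_const
  have hnull : ∀ q : ℚ,
      μ ({x | F x ≤ ((q : ℝ) : EReal)} \ T ⁻¹' {x | F x ≤ ((q : ℝ) : EReal)}) = 0 := by
    intro q
    set A := {x | F x ≤ ((q : ℝ) : EReal)} with hAdef
    set B := T ⁻¹' A with hBdef
    have hBmeas : MeasurableSet B := hT.measurable (hA q)
    have hBA : μ (B \ A) = 0 := by
      refine measure_mono_null (fun x hx => ?_) (MeasureTheory.ae_iff.1 hle)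
      rcases hx with ⟨hxB, hxA⟩
      simp only [Set.mem_setOf_eq]
      intro habs
      exact hxA (habs.trans hxB)
    have hμeq : μ B = μ A := hT.measure_preimage (hA q).nullMeasurableSet
    have h1 : μ (B ∪ A) = μ B + μ (A \ B) := by
      rw [← Set.union_diff_self]
      exact measure_union disjoint_sdiff_self_right ((hA q).diff hBmeas)
    have h2 : μ (A ∪ B) = μ A + μ (B \ A) := by
      rw [← Set.union_diff_self]
      exact measure_union disjoint_sdiff_self_right (hBmeas.diff (hA q))
    rw [Set.union_comm] at h1
    rw [hBA, add_zero] at h2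
    have h3 : μ A + 0 = μ A + μ (A \ B) := by
      rw [add_zero]
      nth_rewrite 1 [← h2]
      rw [h1, hμeq]
    exact ((ENNReal.add_right_inj (measure_ne_top μ A)).1 h3).symm
  have hq : ∀ᵐ x ∂μ, ∀ q : ℚ, F x ≤ ((q : ℝ) : EReal) → F (T x) ≤ ((q : ℝ) : EReal) := by
    rw [MeasureTheory.ae_all_iff]
    intro q
    have := MeasureTheory.measure_eq_zero_iff_ae_notMem.1 (hnull q)
    filter_upwards [this] with x hx hxq
    by_contra habs
    exact hx ⟨hxq, habs⟩
  filter_upwards [hle, hq] with x h1 h2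
  refine le_antisymm ?_ h1
  by_contra habs
  push_neg at habs
  obtain ⟨q, hq1, hq2⟩ := EReal.exists_rat_btwn_of_lt habs
  exact absurd (h2 q hq1.le) (not_le.2 hq2)
end

section
/- Let (X, 𝓕, μ) be a probability space, T : X → X a measurable map preserving μ, and g ∈ L¹(dμ). Let (σ_n)_{n∈ℕ} be a sequence of nonnegative integers with σ_n/n → 0. Then for μ-almost every x, g(T^{n+σ_n} x)/n → 0 as n → ∞. -/
open Filter Topology MeasureTheory

lemma ae_iterate_div_tendsto
    {X : Type*} [MeasurableSpace X] (μ : Measure X) [IsProbabilityMeasure μ]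
    (T : X → X) (hT : MeasurePreserving T μ μ)
    (g : X → ℝ) (hg : Integrable g μ) :
    ∀ᵐ x ∂μ, Filter.Tendsto (fun n : ℕ => g (T^[n] x) / n) Filter.atTop (𝓝 0) := by
  letI : MeasureSpace X := ⟨μ⟩
  have key : ∀ k : ℕ, ∀ᵐ x ∂μ, ∀ᶠ n : ℕ in atTop,
      ¬ ((k + 1 : ℝ) * |g (T^[n] x)| ∈ Set.Ioi (n : ℝ)) := by
    intro k
    have hY : Integrable (fun x => (k + 1 : ℝ) * |g x|) μ := (hg.abs.const_mul _)
    have hsum : (∑' n : ℕ, μ {x | (k + 1 : ℝ) * |g x| ∈ Set.Ioi (n : ℝ)}) < ⊤ :=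
      ProbabilityTheory.tsum_prob_mem_Ioi_lt_top hY
        (fun x => by positivity)
    have hns : ∀ n : ℕ, NullMeasurableSet {x | (k + 1 : ℝ) * |g x| ∈ Set.Ioi (n : ℝ)} μ := by
      intro n
      exact ((aemeasurable_const.mul hg.abs.aemeasurable : AEMeasurable (fun x => (k+1:ℝ) * |g x|) μ)).nullMeasurable measurableSet_Ioi
    have heq : ∀ n : ℕ, μ {x | (k + 1 : ℝ) * |g (T^[n] x)| ∈ Set.Ioi (n : ℝ)}
        = μ {x | (k + 1 : ℝ) * |g x| ∈ Set.Ioi (n : ℝ)} := by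
      intro n
      have := (hT.iterate n).measure_preimage (hns n)
      simpa [Set.preimage_setOf_eq] using this
    have h0 : μ {x | ∃ᶠ n : ℕ in atTop,
        (k + 1 : ℝ) * |g (T^[n] x)| ∈ Set.Ioi (n : ℝ)} = 0 := by
      apply measure_setOf_frequently_eq_zero
      rw [tsum_congr heq]
      exact hsum.ne
    have := ae_iff.2 h0
    filter_upwards [this] with x hx
    simpa [Filter.not_frequently] using hx
  rw [← MeasureTheory.ae_all_iff] at key
  filter_upwards [key] with x hx
  rw [Metric.tendsto_atTop]
  intro ε hε
  obtain ⟨k, hk⟩ := exists_nat_gt (1 / ε)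
  have hx' := hx k
  rw [Filter.eventually_atTop] at hx'
  obtain ⟨N, hN⟩ := hx'
  refine ⟨max N 1, fun n hn => ?_⟩
  have hn1 : (1 : ℕ) ≤ n := le_trans (le_max_right _ _) hn
  have hNn : N ≤ n := le_trans (le_max_left _ _) hn
  have hb := hN n hNn
  simp only [Set.mem_Ioi, not_lt] at hb
  have hnpos : (0 : ℝ) < n := by exact_mod_cast hn1
  rw [Real.dist_eq, sub_zero, abs_div, abs_of_pos hnpos, div_lt_iff₀ hnpos]
  have hk1 : (0 : ℝ) < k + 1 := by positivity
  have h1 : |g (T^[n] x)| ≤ n / (k + 1) := by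
    rw [le_div_iff₀ hk1]
    linarith [hb]
  refine lt_of_le_of_lt h1 ?_
  rw [div_lt_iff₀ hk1]
  have : 1 / ε < k + 1 := lt_of_lt_of_le hk (by linarith)
  have h2 : 1 < ε * (k + 1) := by
    rw [div_lt_iff₀ hε] at this
    linarith
  calc (n : ℝ) = n * 1 := by ring
    _ < n * (ε * (k+1)) := by
        exact mul_lt_mul_of_pos_left h2 hnpos
    _ = ε * n * (k+1) := by ring

/-- **Gapped Avila–Bochi lemma.**  If `T` preserves the probability measure `μ`,
`g ∈ L¹(dμ)`, and `(σ_n)` is a sequence of nonnegative integers with `σ_n/n → 0`,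
then for μ-almost every `x`, `g(T^{n+σ_n} x)/n → 0` as `n → ∞`. -/
theorem gapped_birkhoff_sublinear
    {X : Type*} [MeasurableSpace X] (μ : Measure X) [IsProbabilityMeasure μ]
    (T : X → X) (hT : MeasurePreserving T μ μ)
    (g : X → ℝ) (hg : Integrable g μ)
    (σ : ℕ → ℕ)
    (hσ : Filter.Tendsto (fun n => (σ n : ℝ) / n) Filter.atTop (𝓝 0)) :
    ∀ᵐ x ∂μ, Filter.Tendsto (fun n : ℕ => g (T^[n + σ n] x) / n)
      Filter.atTop (𝓝 0) := by
  filter_upwards [ae_iterate_div_tendsto μ T hT g hg] with x hx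
  have hm : Tendsto (fun n : ℕ => n + σ n) atTop atTop :=
    tendsto_atTop_mono (fun n => Nat.le_add_right n (σ n)) tendsto_id
  have h1 : Tendsto (fun n : ℕ => g (T^[n + σ n] x) / (n + σ n : ℕ)) atTop (𝓝 0) :=
    hx.comp hm
  have h2 : Tendsto (fun n : ℕ => ((n + σ n : ℕ) : ℝ) / n) atTop (𝓝 1) := by
    have : Tendsto (fun n : ℕ => 1 + (σ n : ℝ) / n) atTop (𝓝 (1 + 0)) :=
      tendsto_const_nhds.add hσ
    rw [add_zero] at this
    apply this.congr'
    filter_upwards [eventually_ge_atTop 1] with n hn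
    have hn0 : (n : ℝ) ≠ 0 := by positivity
    push_cast
    field_simp
  have := h1.mul h2
  rw [zero_mul] at this
  apply this.congr'
  filter_upwards [eventually_ge_atTop 1] with n hn
  have hn0 : (n : ℝ) ≠ 0 := by positivity
  have hm0 : ((n + σ n : ℕ) : ℝ) ≠ 0 := by positivity
  field_simp
end

section
/- Assume the hypotheses of the gapped almost subadditive ergodic theorem: (X, 𝓕, μ, T) a measure-preserving dynamical system with μ a probability measure; (f_n)_{n∈ℕ} measurable real-valued functions with positive parts f_{n,+} ∈ L¹(dμ); (σ_n)_{n∈ℕ} nonnegative integers with σ_1 = 0 and σ_n/n → 0; (ρ_n)_{n∈ℕ} nonnegative L¹(dμ) functions with f_{n+σ_n+m} ≤ f_n + ρ_n + f_m ∘ T^{n+σ_n} μ-a.s. for all n, m ∈ ℕ and ρ_n/n → 0 μ-a.s. Let f(x) := liminf_{n→∞} f_n(x)/n (valued in [-∞, ∞)). Then for every ε > 0 there exists r₀ ∈ ℕ (depending only on ε and the sequence (σ_n)) such that for every r ≥ r₀, for μ-almost every x there exist infinitely many k ∈ ℕ with (f_{kr}(x) + ρ_{kr}(x))/(kr + σ_{kr})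 ≤ max{f(x), -ε⁻¹} + ε. -/
open Filter Topology MeasureTheory
open scoped ENNReal

lemma aux_bc {X : Type*} [MeasurableSpace X] (μ : Measure X) [IsProbabilityMeasure μ]
    (T : X → X) (hT : MeasurePreserving T μ μ) (g : X → ℝ) (hg : Measurable g)
    (hgi : Integrable g μ) (hg0 : ∀ x, 0 ≤ g x) (c : ℝ) (hc : 0 < c) :
    ∀ᵐ x ∂μ, ∀ᶠ N in atTop, g (T^[N] x) ≤ c * ((N : ℝ) + 1) := by
  have key : (∑' j : ℕ, μ {y | g y / c ∈ Set.Ioi (j : ℝ)}) < ∞ := by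
    let mX : MeasureSpace X := ⟨μ⟩
    haveI : IsProbabilityMeasure (MeasureTheory.volume : Measure X) := ‹IsProbabilityMeasure μ›
    exact ProbabilityTheory.tsum_prob_mem_Ioi_lt_top (X := fun y => g y / c)
      (hgi.div_const c) (fun y => div_nonneg (hg0 y) hc.le)
  have hmeas : ∀ N : ℕ, MeasurableSet {y | c * ((N : ℝ) + 1) < g y} := fun N =>
    measurableSet_lt measurable_const hg
  have hsum : (∑' N : ℕ, μ (T^[N] ⁻¹' {y | c * ((N : ℝ) + 1) < g y})) ≠ ∞ := by
    apply LT.lt.ne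
    have heq : ∀ N : ℕ, μ (T^[N] ⁻¹' {y | c * ((N : ℝ) + 1) < g y})
        = μ {y | c * ((N : ℝ) + 1) < g y} := fun N =>
      (hT.iterate N).measure_preimage (hmeas N).nullMeasurableSet
    have hle : ∀ N : ℕ, μ {y | c * ((N : ℝ) + 1) < g y} ≤ μ {y | g y / c ∈ Set.Ioi (N : ℝ)} := by
      intro N
      apply measure_mono
      intro y hy
      have hy' : c * ((N : ℝ) + 1) < g y := hy
      have : (N : ℝ) < g y / c := (lt_div_iff₀ hc).mpr (by nlinarith)
      simpa [Set.mem_Ioi] using this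
    calc (∑' N : ℕ, μ (T^[N] ⁻¹' {y | c * ((N : ℝ) + 1) < g y}))
        = ∑' N : ℕ, μ {y | c * ((N : ℝ) + 1) < g y} := tsum_congr heq
      _ ≤ ∑' N : ℕ, μ {y | g y / c ∈ Set.Ioi (N : ℝ)} := ENNReal.tsum_le_tsum hle
      _ < ∞ := key
  filter_upwards [MeasureTheory.ae_eventually_notMem hsum] with x hx
  refine hx.mono fun N h => ?_
  exact not_lt.mp fun hlt => h hlt

/-- **Step 2 of the gapped almost subadditive ergodic theorem.**  Under the hypotheses
of the gapped almost subadditive ergodic theorem, with `f(x) = liminf_n f_n(x)/n`, for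
every `ε > 0` there is `r₀` such that for all `r ≥ r₀`, μ-a.s. there are infinitely many
`k` with `(f_{kr}(x) + ρ_{kr}(x))/(kr + σ_{kr}) ≤ max{f(x), -ε⁻¹} + ε`. -/
theorem gapped_subadditive_step2
    {X : Type*} [MeasurableSpace X] (μ : Measure X) [IsProbabilityMeasure μ]
    (T : X → X) (hT : MeasurePreserving T μ μ)
    (f : ℕ → X → ℝ) (hf_meas : ∀ n, 1 ≤ n → Measurable (f n))
    (hf_int : ∀ n, 1 ≤ n → Integrable (fun x => max (f n x) 0) μ)
    (σ : ℕ → ℕ) (hσ1 : σ 1 = 0)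
    (hσ : Filter.Tendsto (fun n => (σ n : ℝ) / n) Filter.atTop (𝓝 0))
    (ρ : ℕ → X → ℝ) (hρ_nonneg : ∀ n, 1 ≤ n → ∀ x, 0 ≤ ρ n x)
    (hρ_int : ∀ n, 1 ≤ n → Integrable (ρ n) μ)
    (hsub : ∀ n m, 1 ≤ n → 1 ≤ m → ∀ᵐ x ∂μ,
      f (n + σ n + m) x ≤ f n x + ρ n x + f m (T^[n + σ n] x))
    (hρ0 : ∀ᵐ x ∂μ, Filter.Tendsto (fun n => ρ n x / n) Filter.atTop (𝓝 0)) :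
    ∀ ε : ℝ, 0 < ε → ∃ r₀ : ℕ, 1 ≤ r₀ ∧ ∀ r : ℕ, r₀ ≤ r →
      ∀ᵐ x ∂μ, ∃ᶠ k in Filter.atTop, 1 ≤ k ∧
        (((f (k * r) x + ρ (k * r) x) / (k * r + σ (k * r) : ℕ) : ℝ) : EReal)
          ≤ max (Filter.liminf (fun n : ℕ => ((f n x : EReal) / (n : EReal))) Filter.atTop)
              ((-ε⁻¹ : ℝ) : EReal) + (ε : EReal) := by
  intro ε hε
  refine ⟨1, le_rfl, fun r hr => ?_⟩
  have hr0 : 0 < r := hr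
  set G : X → ℝ := fun y => ∑ m ∈ Finset.Icc 1 r, max (f m y) 0 with hG
  have hG0 : ∀ y, 0 ≤ G y := fun y => Finset.sum_nonneg fun m _ => le_max_right _ _
  have hGmeas : Measurable G :=
    Finset.measurable_sum _ fun m hm => (hf_meas m (Finset.mem_Icc.mp hm).1).max measurable_const
  have hGint : Integrable G μ :=
    integrable_finset_sum _ fun m hm => hf_int m (Finset.mem_Icc.mp hm).1
  have hfG : ∀ m, 1 ≤ m → m ≤ r → ∀ y, f m y ≤ G y := fun m h1 h2 y =>
    le_trans (le_max_left _ _)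
      (Finset.single_le_sum (fun i _ => le_max_right (f i y) 0)
        (Finset.mem_Icc.mpr ⟨h1, h2⟩))
  have hBC := aux_bc μ T hT G hGmeas hGint hG0 (ε/8) (by positivity)
  clear_value G
  have hsubae : ∀ᵐ x ∂μ, ∀ n m : ℕ, 1 ≤ n → 1 ≤ m →
      f (n + σ n + m) x ≤ f n x + ρ n x + f m (T^[n + σ n] x) := by
    rw [MeasureTheory.ae_all_iff]
    intro n
    rw [MeasureTheory.ae_all_iff]
    intro m
    rcases Nat.lt_or_ge n 1 with h | h1
    · filter_upwards with x h1' h2'; exact absurd h1' (by omega)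
    rcases Nat.lt_or_ge m 1 with h | h2
    · filter_upwards with x h1' h2'; exact absurd h2' (by omega)
    filter_upwards [hsub n m h1 h2] with x hx _ _ using hx
  filter_upwards [hsubae, hρ0, hBC] with x hsx hρx hGx
  set L := Filter.liminf (fun n : ℕ => ((f n x : EReal) / (n : EReal))) Filter.atTop with hLdef
  clear_value L
  by_cases hL : L = ⊤
  · rw [Filter.frequently_atTop]
    intro b
    refine ⟨max b 1, le_max_left _ _, le_max_right _ _, ?_⟩
    have hmax : max L (((-ε⁻¹ : ℝ)) : EReal) = ⊤ := by rw [hL]; exact max_eq_left le_top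
    rw [hmax, EReal.top_add_coe]
    exact le_top
  · set c' : EReal := ((-ε⁻¹ : ℝ) : EReal) with hc'
    have hMne_top : max L c' ≠ ⊤ :=
      (max_lt (Ne.lt_top hL) (EReal.coe_lt_top _)).ne
    have hMne_bot : max L c' ≠ ⊥ :=
      ((EReal.bot_lt_coe _).trans_le (le_max_right _ _)).ne'
    set t : ℝ := (max L c').toReal with htdef
    have ht : (t : EReal) = max L c' := EReal.coe_toReal hMne_top hMne_bot
    clear_value t
    have hLt : L ≤ (t : EReal) := ht ▸ le_max_left _ _
    have hfreq0 : ∃ᶠ n in atTop, ((f n x : EReal) / (n : EReal)) < ((t + ε/4 : ℝ) : EReal) := by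
      have hlim : L < ((t + ε/4 : ℝ) : EReal) :=
        lt_of_le_of_lt hLt (EReal.coe_lt_coe_iff.mpr (by linarith))
      rw [hLdef] at hlim
      exact Filter.frequently_lt_of_liminf_lt (by isBoundedDefault) hlim
    have hfreq : ∃ᶠ n in atTop, 1 ≤ n ∧ f n x ≤ (t + ε/4) * n := by
      refine (hfreq0.and_eventually (eventually_ge_atTop 1)).mono ?_
      rintro n ⟨hlt, hn1⟩
      refine ⟨hn1, ?_⟩
      have hn0 : (0:ℝ) < n := by exact_mod_cast hn1
      have hlt2 : ((f n x / (n:ℝ) : ℝ) : EReal) < ((t + ε/4 : ℝ) : EReal) := by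
        rw [EReal.coe_div, EReal.coe_coe_eq_natCast]
        exact hlt
      have hlt' : f n x / n < t + ε/4 := EReal.coe_lt_coe_iff.mp hlt2
      have := (div_lt_iff₀ hn0).mp hlt'
      linarith
    set C : ℝ := |t + ε/4| with hCdef
    have hC0 : 0 ≤ C := abs_nonneg _
    have habs1 : -C ≤ t+ε/4 := neg_abs_le _
    have habs2 : t+ε/4 ≤ C := le_abs_self _
    have hC1 : (0:ℝ) < C + 1 := by linarith
    clear_value C
    obtain ⟨n₁, hn₁⟩ := (Filter.eventually_atTop).mp
      ((hρx.eventually_lt_const (show (0:ℝ) < ε/8 by positivity)).and (eventually_ge_atTop 1))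
    have hρbound : ∀ M, n₁ ≤ M → ρ M x ≤ ε/8 * M := by
      intro M hM
      obtain ⟨h, h1⟩ := hn₁ M hM
      have hM0 : (0:ℝ) < M := by exact_mod_cast h1
      have := (div_lt_iff₀ hM0).mp h
      linarith
    obtain ⟨n₂, hn₂⟩ := Filter.eventually_atTop.mp hGx
    obtain ⟨n₃, hn₃⟩ := Filter.eventually_atTop.mp
      ((hσ.eventually_lt_const (show (0:ℝ) < ε/(12*(C+1)) from div_pos hε (by linarith))).and
        (eventually_ge_atTop 1))
    have hσbound : ∀ M, n₃ ≤ M → (C+1) * (σ M : ℝ) ≤ ε/12 * M := by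
      intro M hM
      obtain ⟨h, h1⟩ := hn₃ M hM
      have hM0 : (0:ℝ) < M := by exact_mod_cast h1
      have h2 := (div_lt_iff₀ hM0).mp h
      have h3 : (C+1) * (σ M : ℝ) ≤ (C+1) * (ε/(12*(C+1)) * M) :=
        mul_le_mul_of_nonneg_left h2.le hC1.le
      have h4 : (C+1) * (ε/(12*(C+1)) * M) = ε/12 * M := by
        field_simp
      linarith [h4 ▸ h3]
    obtain ⟨n₄, hn₄⟩ := exists_nat_ge ((C+1)*(r:ℝ) * 12 / ε)
    rw [Filter.frequently_atTop]
    intro b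
    obtain ⟨n, hn, hn1, hfn⟩ := Filter.frequently_atTop.mp hfreq
      (max n₁ (max n₂ (max n₃ (max n₄ (b * r + 1)))))
    have hn₁n : n₁ ≤ n := le_trans (le_max_left _ _) hn
    have hn₂n : n₂ ≤ n := le_trans (le_trans (le_max_left _ _) (le_max_right _ _)) hn
    have hn₃n : n₃ ≤ n := le_trans (le_trans (le_trans (le_max_left _ _) (le_max_right _ _))
      (le_max_right _ _)) hn
    have hn₄n : n₄ ≤ n := le_trans (le_trans (le_trans (le_trans (le_max_left _ _)
      (le_max_right _ _)) (le_max_right _ _)) (le_max_right _ _)) hn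
    have hbrn : b * r + 1 ≤ n := le_trans (le_trans (le_trans (le_trans (le_max_right _ _)
      (le_max_right _ _)) (le_max_right _ _)) (le_max_right _ _)) hn
    obtain ⟨N, hN⟩ : ∃ N, N = n + σ n := ⟨_, rfl⟩
    obtain ⟨k, hk⟩ : ∃ k, k = N / r + 1 := ⟨_, rfl⟩
    obtain ⟨D, hD⟩ : ∃ D, D = k * r := ⟨_, rfl⟩
    obtain ⟨m, hm⟩ : ∃ m, m = D - N := ⟨_, rfl⟩
    have hkr1 : N < D := by
      rw [hD, hk]
      exact (Nat.div_lt_iff_lt_mul hr0).mp (Nat.lt_succ_self _)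
    have hkr2 : D ≤ N + r := by
      rw [hD, hk, add_mul, one_mul]
      exact Nat.add_le_add_right (Nat.div_mul_le_self N r) r
    have hk1 : 1 ≤ k := by rw [hk]; exact Nat.succ_le_succ (Nat.zero_le _)
    clear hk
    have hnN : n ≤ N := by omega
    have hm1 : 1 ≤ m := by omega
    have hmr : m ≤ r := by omega
    have hNm : N + m = D := by omega
    have hbk : b ≤ k := by
      have h1 : b * r < k * r := by rw [← hD]; omega
      exact (lt_of_mul_lt_mul_right h1 (Nat.zero_le r)).le
    refine ⟨k, hbk, hk1, ?_⟩
    rw [← hD]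
    · -- the main inequality
      have hD1 : 1 ≤ D := by omega
      have hDσ1 : 1 ≤ D + σ D := by omega
      have hD'pos : (0:ℝ) < ((D + σ D : ℕ) : ℝ) := by exact_mod_cast hDσ1
      have key1 : f D x ≤ f n x + ρ n x + G (T^[N] x) := by
        have h := hsx n m hn1 hm1
        rw [← hN] at h
        rw [show N + m = D from by omega] at h
        have h2 := hfG m hm1 hmr (T^[N] x)
        linarith
      have h2 : f n x ≤ (t + ε/4) * n := hfn
      have h3 : ρ n x ≤ ε/8 * n := hρbound n hn₁n
      have h4 : G (T^[N] x) ≤ ε/8 * ((N:ℝ) + 1) := hn₂ N (by omega)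
      have h5 : ρ D x ≤ ε/8 * D := hρbound D (by omega)
      have h7 : (C+1) * (σ n : ℝ) ≤ ε/12 * n := hσbound n hn₃n
      have h9 : (C+1) * (σ D : ℝ) ≤ ε/12 * D := hσbound D (by omega)
      have h8 : (C+1) * (r:ℝ) ≤ ε/12 * n := by
        have hn4 : (n₄:ℝ) ≤ n := by exact_mod_cast hn₄n
        have h := hn₄.trans hn4
        rw [div_le_iff₀ hε] at h
        linarith
      have e1 : ((D:ℕ):ℝ) = (n:ℝ) + (σ n : ℝ) + (m:ℝ) := by
        rw [show D = n + σ n + m from by omega]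
        push_cast
        ring
      have e2 : ((D + σ D : ℕ):ℝ) = (D:ℝ) + (σ D : ℝ) := by push_cast; ring
      have hmr' : (m:ℝ) ≤ r := by exact_mod_cast hmr
      have hnD' : (n:ℝ) ≤ ((D + σ D:ℕ):ℝ) := by exact_mod_cast (show n ≤ D + σ D by omega)
      have hDD' : (D:ℝ) ≤ ((D + σ D:ℕ):ℝ) := by exact_mod_cast Nat.le_add_right _ _
      have hND' : ((N:ℝ)+1) ≤ ((D + σ D:ℕ):ℝ) := by
        exact_mod_cast (show N + 1 ≤ D + σ D by omega)
      have hn1' : (1:ℝ) ≤ n := by exact_mod_cast hn1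
      have hσn0 : (0:ℝ) ≤ (σ n : ℝ) := Nat.cast_nonneg _
      have hσD0 : (0:ℝ) ≤ (σ D : ℝ) := Nat.cast_nonneg _
      have hr0' : (0:ℝ) ≤ (r : ℝ) := Nat.cast_nonneg _
      have h6 : (t+ε/4) * n ≤ (t+ε/4) * ((D + σ D:ℕ):ℝ)
          + C*(σ n : ℝ) + C*(r:ℝ) + C*(σ D : ℝ) := by
        have hd : (n:ℝ) - ((D + σ D:ℕ):ℝ) ≤ 0 := by linarith
        have hmul := mul_le_mul_of_nonpos_right habs1 hd
        have hD'e : ((D + σ D:ℕ):ℝ) = (n:ℝ) + (σ n : ℝ) + (m:ℝ) + (σ D : ℝ) := by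
          rw [e2, e1]
        have q3 : C * ((D + σ D:ℕ):ℝ)
            = C*(n:ℝ) + C*(σ n : ℝ) + C*(m:ℝ) + C*(σ D : ℝ) := by
          linear_combination C * hD'e
        have hCm : C * (m:ℝ) ≤ C * r := mul_le_mul_of_nonneg_left hmr' hC0
        linarith [hmul, q3, hCm]
      have hε8 : (0:ℝ) ≤ ε/8 := by positivity
      have hε12 : (0:ℝ) ≤ ε/12 := by positivity
      have p1 : ε/12*(n:ℝ) ≤ ε/12*((D + σ D:ℕ):ℝ) := mul_le_mul_of_nonneg_left hnD' hε12
      have p2 : ε/12*(D:ℝ) ≤ ε/12*((D + σ D:ℕ):ℝ) := mul_le_mul_of_nonneg_left hDD' hε12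
      have p3 : ε/8*(n:ℝ) ≤ ε/8*((D + σ D:ℕ):ℝ) := mul_le_mul_of_nonneg_left hnD' hε8
      have p4 : ε/8*((N:ℝ)+1) ≤ ε/8*((D + σ D:ℕ):ℝ) := mul_le_mul_of_nonneg_left hND' hε8
      have p5 : ε/8*(D:ℝ) ≤ ε/8*((D + σ D:ℕ):ℝ) := mul_le_mul_of_nonneg_left hDD' hε8
      have p6 : (0:ℝ) ≤ ε/8 * ((D + σ D:ℕ):ℝ) := by positivity
      have pC1 : C*(σ n : ℝ) ≤ (C+1)*(σ n : ℝ) := by linarith [hσn0]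
      have pC2 : C*(r:ℝ) ≤ (C+1)*(r:ℝ) := by linarith [hr0']
      have pC3 : C*(σ D : ℝ) ≤ (C+1)*(σ D : ℝ) := by linarith [hσD0]
      have main : f D x + ρ D x ≤ (t + ε) * ((D + σ D:ℕ):ℝ) := by linarith [key1, h2, h3, h4, h5, h6, h7, h8, h9, p1, p2, p3, p4, p5, p6, pC1, pC2, pC3]
      have hdiv : (f D x + ρ D x) / ((D + σ D:ℕ):ℝ) ≤ t + ε :=
        (div_le_iff₀ hD'pos).mpr main
      calc (((f D x + ρ D x) / ((D + σ D : ℕ):ℝ)) : EReal)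
          ≤ ((t + ε : ℝ) : EReal) := EReal.coe_le_coe_iff.mpr hdiv
        _ = (t : EReal) + (ε : EReal) := EReal.coe_add t ε
        _ = max L c' + (ε : EReal) := by rw [ht]
end

section
/- Assume the hypotheses of the L¹ gapped almost subadditive ergodic theorem: (X, 𝓕, μ, T) a measure-preserving dynamical system with μ a probability measure; (f_n)_{n∈ℕ} measurable real-valued functions with positive parts f_{n,+} ∈ L¹(dμ); (σ_n)_{n∈ℕ} nonnegative integers with σ_1 = 0 and σ_n/n → 0; (ρ_n)_{n∈ℕ} nonnegative L¹(dμ) functions with f_{n+σ_n+m} ≤ f_n + ρ_n + f_m ∘ T^{n+σ_n} μ-a.s. for all n, m ∈ ℕ, ρ_n/n → 0 μ-a.s., and (1/n)∫ρ_n dμ → 0. Then the limit lim_{n→∞} (1/n)∫ f_n dμ exists in [-∞, ∞) and satisfies lim_{n→∞} (1/n)∫ f_n dμ = lim_{ε→0⁺} lim_{n→∞} (1/n) ∫ max{f_n, -n ε⁻¹} dμ, where for each ε > 0 the inner limit over n exists in [-∞, ∞). -/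
open Filter Topology MeasureTheory

/-- The integral of a real-valued function, well defined in `[-∞, ∞)` whenever its
positive part is integrable: it is the difference of the lower integrals of the
positive and negative parts. -/
noncomputable def erealIntegralReal {X : Type*} [MeasurableSpace X]
    (μ : Measure X) (g : X → ℝ) : EReal :=
  ((∫⁻ x, ENNReal.ofReal (g x) ∂μ : ENNReal) : EReal)
    - ((∫⁻ x, ENNReal.ofReal (-(g x)) ∂μ : ENNReal) : EReal)

namespace GSAux

lemma natCast_ereal_eq (n : ℕ) : ((n : ℝ) : EReal) = (n : EReal) := rfl

lemma ereal_natCast_pos {n : ℕ} (hn : 1 ≤ n) : (0 : EReal) < (n : EReal) := by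
  rw [← natCast_ereal_eq]
  exact_mod_cast (by exact_mod_cast hn : (0:ℝ) < n)

lemma ereal_natCast_ne_top (n : ℕ) : (n : EReal) ≠ ⊤ := by
  rw [← natCast_ereal_eq]; exact EReal.coe_ne_top _

lemma bot_div_nat {n : ℕ} (hn : 1 ≤ n) : (⊥ : EReal) / (n : EReal) = ⊥ :=
  EReal.bot_div_of_pos_ne_top (ereal_natCast_pos hn) (ereal_natCast_ne_top n)

/-- Real-analysis core bound for the Fekete argument. -/
lemma real_bound (A : ℕ → ℝ) (k : ℕ) (hk : 1 ≤ k) (c M : ℝ)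
    (hM : ∀ m, 1 ≤ m → m ≤ k → A m ≤ M)
    (hstep : ∀ j m, 1 ≤ m → A (j * k + m) ≤ j * c + A m) :
    ∀ N, 1 ≤ N → A N / N ≤ c / k + (|c| + M) / N := by
  intro N hN
  set j := (N - 1) / k with hj
  set s := (N - 1) % k with hs
  have hks : k * j + s = N - 1 := Nat.div_add_mod (N-1) k
  have hks' : j * k + s = N - 1 := by rw [Nat.mul_comm] at hks; exact hks
  have hsk : s < k := Nat.mod_lt _ (by omega)
  set m := s + 1 with hm
  have hNm : j * k + m = N := by omega
  have hm1 : 1 ≤ m := by omega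
  have hmk : m ≤ k := by omega
  have hA : A N ≤ j * c + A m := by rw [← hNm]; exact hstep j m hm1
  have hNpos : (0:ℝ) < N := by exact_mod_cast hN
  have hkpos : (0:ℝ) < k := by exact_mod_cast hk
  have hjc : (j:ℝ) * c ≤ (N / k) * c + |c| := by
    rcases le_or_gt 0 c with hc | hc
    · have hjk : (j:ℝ) ≤ N / k := by
        rw [le_div_iff₀ hkpos]
        have : j * k ≤ N := by omega
        exact_mod_cast this
      nlinarith [abs_nonneg c]
    · have h2 : (N:ℝ) ≤ (j:ℝ) * k + k := by
        exact_mod_cast (show N ≤ j * k + k by omega)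
      have hjk : (N:ℝ) / k - 1 ≤ j := by
        rw [sub_le_iff_le_add, div_le_iff₀ hkpos]
        nlinarith
      have habs : |c| = -c := abs_of_neg hc
      nlinarith
  have hAm : A m ≤ M := hM m hm1 hmk
  have : A N ≤ (N / k) * c + (|c| + M) := by linarith
  calc A N / N ≤ ((N / k) * c + (|c| + M)) / N := by gcongr
    _ = c / k + (|c| + M) / N := by field_simp

/-- Gapped Fekete lemma over `EReal`. -/
lemma fekete (a : ℕ → EReal) (σ : ℕ → ℕ) (r : ℕ → ℝ)
    (ha_top : ∀ n, 1 ≤ n → a n ≠ ⊤)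
    (hσ : Tendsto (fun n : ℕ => (σ n : ℝ) / n) atTop (𝓝 0))
    (hr : Tendsto (fun n : ℕ => r n / n) atTop (𝓝 0))
    (hsub : ∀ n m, 1 ≤ n → 1 ≤ m → a (n + σ n + m) ≤ a n + (r n : EReal) + a m) :
    Tendsto (fun n : ℕ => a n / (n : EReal)) atTop
      (𝓝 (⨅ k : ℕ, (a (k+1) + (r (k+1) : EReal)) / (((k+1) + σ (k+1) : ℕ) : EReal))) := by
  set I := ⨅ k : ℕ, (a (k+1) + (r (k+1) : EReal)) / (((k+1) + σ (k+1) : ℕ) : EReal) with hI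
  by_cases hbot : ∃ n0, 1 ≤ n0 ∧ a n0 = ⊥
  · obtain ⟨n0, hn0, h0⟩ := hbot
    have hIbot : I = ⊥ := by
      refine le_bot_iff.1 ?_
      have : I ≤ (a (n0-1+1) + (r (n0-1+1) : EReal)) / (((n0-1+1) + σ (n0-1+1) : ℕ) : EReal) :=
        iInf_le _ (n0 - 1)
      rwa [Nat.sub_add_cancel hn0, h0, EReal.bot_add, bot_div_nat (by omega)] at this
    rw [hIbot]
    have hev : ∀ᶠ N in atTop, a N / (N : EReal) = ⊥ := by
      filter_upwards [eventually_ge_atTop (n0 + σ n0 + 1)] with N hN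
      have hm : 1 ≤ N - (n0 + σ n0) := by omega
      have hNeq : n0 + σ n0 + (N - (n0 + σ n0)) = N := by omega
      have : a N ≤ ⊥ := by
        have := hsub n0 (N - (n0 + σ n0)) hn0 hm
        rwa [hNeq, h0, EReal.bot_add, EReal.bot_add] at this
      rw [le_bot_iff.1 this, bot_div_nat (by omega)]
    exact tendsto_const_nhds.congr' (hev.mono fun N h => h.symm)
  · push_neg at hbot
    set A : ℕ → ℝ := fun n => (a n).toReal with hA
    have haA : ∀ n, 1 ≤ n → a n = ((A n : ℝ) : EReal) := fun n hn =>
      (EReal.coe_toReal (ha_top n hn) (hbot n hn)).symm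
    have hsubR : ∀ n m, 1 ≤ n → 1 ≤ m → A (n + σ n + m) ≤ A n + r n + A m := by
      intro n m hn hm
      have := hsub n m hn hm
      rw [haA _ hn, haA _ hm, haA _ (by omega), ← EReal.coe_add, ← EReal.coe_add] at this
      exact_mod_cast this
    -- step iteration
    have hstep : ∀ n, 1 ≤ n → ∀ j m, 1 ≤ m →
        A (j * (n + σ n) + m) ≤ j * (A n + r n) + A m := by
      intro n hn j
      induction j with
      | zero => intro m hm; simp
      | succ j ih =>
        intro m hm
        have h1 : (j+1) * (n + σ n) + m = n + σ n + (j * (n + σ n) + m) := by ring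
        have h2 := hsubR n (j * (n + σ n) + m) hn (by omega)
        have h3 := ih m hm
        rw [h1]
        push_cast
        push_cast at h3
        linarith
    set u : ℕ → EReal := fun N => ((A N / N : ℝ) : EReal) with hu
    set cE : ℕ → ℝ := fun n => (A n + r n) / (n + σ n) with hcE
    have termEq : ∀ k : ℕ,
        (a (k+1) + (r (k+1) : EReal)) / (((k+1) + σ (k+1) : ℕ) : EReal)
          = ((cE (k+1) : ℝ) : EReal) := by
      intro k
      rw [haA _ (by omega), ← EReal.coe_add, ← natCast_ereal_eq, ← EReal.coe_div]
      norm_cast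
      simp only [hcE]
      push_cast
      ring
    -- the uniform bound
    have hbound : ∀ n, 1 ≤ n → ∃ C : ℝ, ∀ N, 1 ≤ N → A N / N ≤ cE n + C / N := by
      intro n hn
      have hk1 : 1 ≤ n + σ n := by omega
      have hne : (Finset.Icc 1 (n + σ n)).Nonempty := ⟨1, by simp [hk1]⟩
      refine ⟨|A n + r n| + (Finset.Icc 1 (n + σ n)).sup' hne A, ?_⟩
      intro N hN
      have := real_bound A (n + σ n) hk1 (A n + r n) ((Finset.Icc 1 (n + σ n)).sup' hne A)
        (fun m h1 h2 => Finset.le_sup' A (by simp [Finset.mem_Icc]; omega))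
        (hstep n hn) N hN
      rw [hcE]
      push_cast at this ⊢
      linarith
    -- limsup bound
    have hlimsup : ∀ n, 1 ≤ n → Filter.limsup u atTop ≤ ((cE n : ℝ) : EReal) := by
      intro n hn
      obtain ⟨C, hC⟩ := hbound n hn
      have key : ∀ δ : ℝ, 0 < δ → Filter.limsup u atTop ≤ ((cE n + δ : ℝ) : EReal) := by
        intro δ hδ
        apply Filter.limsup_le_of_le (by isBoundedDefault)
        have hev : ∀ᶠ N : ℕ in atTop, C / N ≤ δ := by
          have : Tendsto (fun N : ℕ => C / N) atTop (𝓝 0) :=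
            tendsto_const_nhds.div_atTop tendsto_natCast_atTop_atTop
          filter_upwards [this.eventually (eventually_le_nhds hδ)] with N h using h
        filter_upwards [hev, eventually_ge_atTop 1] with N h1 h2
        exact EReal.coe_le_coe_iff.2 (le_trans (hC N h2) (by linarith))
      have htend : Tendsto (fun j : ℕ => ((cE n + 1/(j+1) : ℝ) : EReal)) atTop
          (𝓝 ((cE n : ℝ) : EReal)) := by
        rw [show ((cE n : ℝ) : EReal) = ((cE n + 0 : ℝ) : EReal) by norm_num]
        apply EReal.tendsto_coe.2
        exact tendsto_const_nhds.add (tendsto_one_div_add_atTop_nhds_zero_nat)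
      exact ge_of_tendsto htend (Eventually.of_forall fun j => key _ (by positivity))
    have hLsI : Filter.limsup u atTop ≤ I := by
      refine le_iInf fun k => ?_
      rw [termEq k]
      exact hlimsup (k+1) (by omega)
    -- liminf bound
    have hILi : I ≤ Filter.liminf u atTop := by
      by_contra hcon
      push_neg at hcon
      obtain ⟨x, hx1, hx2⟩ := EReal.exists_between_coe_real hcon
      have hfreq : ∃ᶠ N in atTop, u N < (x : EReal) :=
        Filter.frequently_lt_of_liminf_lt (by isBoundedDefault) hx1
      have hIx : I ≤ (x : EReal) := by
        have key : ∀ δ : ℝ, 0 < δ → I ≤ ((x + δ : ℝ) : EReal) := by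
          intro δ hδ
          have htd : Tendsto (fun N : ℕ => (x + r N / N) / (1 + (σ N : ℝ) / N)) atTop
              (𝓝 x) := by
            have : Tendsto (fun N : ℕ => (x + r N / N) / (1 + (σ N : ℝ) / N)) atTop
                (𝓝 ((x + 0) / (1 + 0))) :=
              Tendsto.div (tendsto_const_nhds.add hr) (tendsto_const_nhds.add hσ) (by norm_num)
            simpa using this
          have hev : ∀ᶠ N : ℕ in atTop, (x + r N / N) / (1 + (σ N : ℝ) / N) ≤ x + δ :=
            htd.eventually (eventually_le_nhds (by linarith))
          obtain ⟨N, hN1, hN2, hN3⟩ :=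
            (hfreq.and_eventually (hev.and (eventually_ge_atTop 1))).exists
          have hNpos : (0:ℝ) < N := by exact_mod_cast hN3
          have hxN : A N < N * x := by
            have := EReal.coe_lt_coe_iff.1 hN1
            rw [div_lt_iff₀ hNpos] at this
            linarith
          have hden : (0:ℝ) < (N:ℝ) + σ N := by positivity
          have hcEN : cE N ≤ x + δ := by
            have heq : (x + r N / N) / (1 + (σ N:ℝ)/N) = ((N:ℝ)*x + r N)/((N:ℝ) + (σ N:ℝ)) := by
              have hN0 : (N:ℝ) ≠ 0 := hNpos.ne'
              have e1 : (N:ℝ)*(x + r N/N) = N*x + r N := by field_simp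
              have e2 : (N:ℝ)*(1+(σ N:ℝ)/N) = (N:ℝ) + (σ N:ℝ) := by field_simp
              rw [← e1, ← e2, mul_div_mul_left _ _ hN0]
            have h1 : cE N ≤ ((N:ℝ) * x + r N) / ((N:ℝ) + (σ N:ℝ)) := by
              rw [hcE]
              push_cast
              rw [div_le_div_iff_of_pos_right hden]
              linarith
            rw [← heq] at h1
            linarith
          have : I ≤ ((cE N : ℝ) : EReal) := by
            have := iInf_le (fun k : ℕ =>
              (a (k+1) + (r (k+1) : EReal)) / (((k+1) + σ (k+1) : ℕ) : EReal)) (N-1)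
            rw [termEq (N-1), Nat.sub_add_cancel hN3] at this
            exact this
          exact this.trans (EReal.coe_le_coe_iff.2 hcEN)
        have htend : Tendsto (fun j : ℕ => ((x + 1/(j+1) : ℝ) : EReal)) atTop
            (𝓝 ((x : ℝ) : EReal)) := by
          rw [show ((x : ℝ) : EReal) = ((x + 0 : ℝ) : EReal) by norm_num]
          exact EReal.tendsto_coe.2
            (tendsto_const_nhds.add (tendsto_one_div_add_atTop_nhds_zero_nat))
        exact ge_of_tendsto htend (Eventually.of_forall fun j => key _ (by positivity))
      exact absurd hIx (not_le.2 hx2)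
    -- conclude
    have hmain : Tendsto u atTop (𝓝 I) :=
      tendsto_of_le_liminf_of_limsup_le hILi hLsI
    apply hmain.congr'
    filter_upwards [eventually_ge_atTop 1] with N hN
    rw [hu]
    simp only
    rw [EReal.coe_div, natCast_ereal_eq, ← haA _ hN]


section MeasureAux

open ENNReal

variable {X : Type*} [MeasurableSpace X] {μ : MeasureTheory.Measure X}

lemma coe_toReal_ennreal {p : ℝ≥0∞} (hp : p ≠ ⊤) : ((p.toReal : ℝ) : EReal) = (p : EReal) := by
  have h1 : (p : EReal) ≠ ⊤ := by simp [EReal.coe_ennreal_eq_top_iff, hp]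
  have h2 : (p : EReal) ≠ ⊥ := by
    intro h
    have := EReal.bot_lt_zero.trans_le (by exact_mod_cast (zero_le : (0:ℝ≥0∞) ≤ p) : (0:EReal) ≤ (p:EReal))
    exact absurd h this.ne'
  rw [← EReal.coe_toReal h1 h2, EReal.toReal_coe_ennreal]

lemma ereal_sub_ennreal {p q : ℝ≥0∞} (hp : p ≠ ⊤) (hq : q ≠ ⊤) :
    (p : EReal) - (q : EReal) = ((p.toReal - q.toReal : ℝ) : EReal) := by
  rw [EReal.coe_sub, coe_toReal_ennreal hp, coe_toReal_ennreal hq]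

lemma ofReal_max_zero (z : ℝ) : ENNReal.ofReal (max z 0) = ENNReal.ofReal z := by
  rcases le_total 0 z with h | h
  · rw [max_eq_left h]
  · rw [max_eq_right h, ENNReal.ofReal_zero, ENNReal.ofReal_of_nonpos h]

lemma lintegral_ofReal_ne_top_of_integrable {g : X → ℝ}
    (hg : MeasureTheory.Integrable g μ) : ∫⁻ x, ENNReal.ofReal (g x) ∂μ ≠ ⊤ := by
  have hb : (∫⁻ x, (‖g x‖₊ : ℝ≥0∞) ∂μ) < ⊤ := hg.hasFiniteIntegral
  refine ne_top_of_le_ne_top hb.ne (MeasureTheory.lintegral_mono fun x => ?_)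
  rw [← enorm_eq_nnnorm, Real.enorm_eq_ofReal_abs]
  exact ENNReal.ofReal_le_ofReal (le_abs_self _)

lemma pos_lintegral_ne_top {g : X → ℝ}
    (h : MeasureTheory.Integrable (fun x => max (g x) 0) μ) :
    ∫⁻ x, ENNReal.ofReal (g x) ∂μ ≠ ⊤ := by
  have := lintegral_ofReal_ne_top_of_integrable h
  rwa [MeasureTheory.lintegral_congr (fun x => ofReal_max_zero (g x))] at this

lemma erealIntegralReal_lt_top {g : X → ℝ}
    (h : MeasureTheory.Integrable (fun x => max (g x) 0) μ) :
    erealIntegralReal μ g < ⊤ := by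
  unfold erealIntegralReal
  have h1 : ((∫⁻ x, ENNReal.ofReal (g x) ∂μ : ℝ≥0∞) : EReal) < ⊤ := by
    rw [lt_top_iff_ne_top]
    simp [EReal.coe_ennreal_eq_top_iff, pos_lintegral_ne_top h]
  refine lt_of_le_of_lt ?_ h1
  rw [sub_eq_add_neg]
  calc ((∫⁻ x, ENNReal.ofReal (g x) ∂μ : ℝ≥0∞) : EReal)
        + (-((∫⁻ x, ENNReal.ofReal (-(g x)) ∂μ : ℝ≥0∞) : EReal))
      ≤ ((∫⁻ x, ENNReal.ofReal (g x) ∂μ : ℝ≥0∞) : EReal) + 0 := by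
        apply add_le_add_right
        rw [← neg_zero]
        exact EReal.neg_le_neg_iff.2 (by exact_mod_cast (zero_le : (0:ℝ≥0∞) ≤ _))
    _ = _ := add_zero _

lemma erealIntegralReal_mono {g h : X → ℝ} (hgh : ∀ᵐ x ∂μ, g x ≤ h x) :
    erealIntegralReal μ g ≤ erealIntegralReal μ h := by
  unfold erealIntegralReal
  apply EReal.sub_le_sub
  · exact_mod_cast MeasureTheory.lintegral_mono_ae
      (hgh.mono fun x hx => ENNReal.ofReal_le_ofReal hx)
  · exact_mod_cast MeasureTheory.lintegral_mono_ae
      (hgh.mono fun x hx => ENNReal.ofReal_le_ofReal (by linarith))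

lemma erealIntegralReal_eq_integral {g : X → ℝ} (hg : MeasureTheory.Integrable g μ) :
    erealIntegralReal μ g = ((∫ x, g x ∂μ : ℝ) : EReal) := by
  have hP := lintegral_ofReal_ne_top_of_integrable hg
  have hN : ∫⁻ x, ENNReal.ofReal (-(g x)) ∂μ ≠ ⊤ := by
    simpa using lintegral_ofReal_ne_top_of_integrable hg.neg
  unfold erealIntegralReal
  rw [MeasureTheory.integral_eq_lintegral_pos_part_sub_lintegral_neg_part hg,
    ereal_sub_ennreal hP hN]

lemma erealIntegralReal_comp_iterate {Y : X → X} (hY : MeasureTheory.MeasurePreserving Y μ μ)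
    (k : ℕ) {g : X → ℝ} (hg : Measurable g) :
    erealIntegralReal μ (fun x => g (Y^[k] x)) = erealIntegralReal μ g := by
  have h1 : (∫⁻ x, ENNReal.ofReal (g (Y^[k] x)) ∂μ) = ∫⁻ x, ENNReal.ofReal (g x) ∂μ :=
    (hY.iterate k).lintegral_comp (ENNReal.measurable_ofReal.comp hg)
  have h2 : (∫⁻ x, ENNReal.ofReal (-(g (Y^[k] x))) ∂μ) = ∫⁻ x, ENNReal.ofReal (-(g x)) ∂μ :=
    (hY.iterate k).lintegral_comp (ENNReal.measurable_ofReal.comp hg.neg)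
  unfold erealIntegralReal
  rw [h1, h2]

lemma max_zero_identity (a b : ℝ) :
    max (a + b) 0 + (max (-a) 0 + max (-b) 0) = max (-(a + b)) 0 + (max a 0 + max b 0) := by
  have hz : ∀ z : ℝ, max z 0 = (z + |z|) / 2 := by
    intro z
    rcases abs_cases z with ⟨h1, h2⟩ | ⟨h1, h2⟩
    · rw [max_eq_left h2, h1]; ring
    · rw [max_eq_right (le_of_lt h2), h1]; ring
  rw [hz, hz, hz, hz, hz, hz, abs_neg, abs_neg, abs_neg]
  ring

lemma ofReal_add_identity (a b : ℝ) :
    ENNReal.ofReal (a + b) + (ENNReal.ofReal (-a) + ENNReal.ofReal (-b))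
      = ENNReal.ofReal (-(a + b)) + (ENNReal.ofReal a + ENNReal.ofReal b) := by
  rw [← ofReal_max_zero (a+b), ← ofReal_max_zero (-a), ← ofReal_max_zero (-b),
    ← ofReal_max_zero (-(a+b)), ← ofReal_max_zero a, ← ofReal_max_zero b,
    ← ENNReal.ofReal_add (le_max_right _ _) (le_max_right _ _),
    ← ENNReal.ofReal_add (le_max_right _ _) (add_nonneg (le_max_right _ _) (le_max_right _ _)),
    ← ENNReal.ofReal_add (le_max_right _ _) (le_max_right _ _),
    ← ENNReal.ofReal_add (le_max_right _ _) (add_nonneg (le_max_right _ _) (le_max_right _ _)),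
    max_zero_identity]

lemma erealIntegralReal_add_le {u v : X → ℝ}
    (hu : AEMeasurable u μ) (hv : AEMeasurable v μ)
    (hui : MeasureTheory.Integrable (fun x => max (u x) 0) μ)
    (hvi : MeasureTheory.Integrable (fun x => max (v x) 0) μ) :
    erealIntegralReal μ (fun x => u x + v x)
      ≤ erealIntegralReal μ u + erealIntegralReal μ v := by
  set Pu := ∫⁻ x, ENNReal.ofReal (u x) ∂μ with hPu
  set Nu := ∫⁻ x, ENNReal.ofReal (-(u x)) ∂μ with hNu
  set Pv := ∫⁻ x, ENNReal.ofReal (v x) ∂μ with hPv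
  set Nv := ∫⁻ x, ENNReal.ofReal (-(v x)) ∂μ with hNv
  set Ps := ∫⁻ x, ENNReal.ofReal (u x + v x) ∂μ with hPs
  set Ns := ∫⁻ x, ENNReal.ofReal (-(u x + v x)) ∂μ with hNs
  have hPu' : Pu ≠ ⊤ := pos_lintegral_ne_top hui
  have hPv' : Pv ≠ ⊤ := pos_lintegral_ne_top hvi
  have hmu : AEMeasurable (fun x => ENNReal.ofReal (u x)) μ :=
    ENNReal.measurable_ofReal.comp_aemeasurable hu
  have hmv : AEMeasurable (fun x => ENNReal.ofReal (v x)) μ :=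
    ENNReal.measurable_ofReal.comp_aemeasurable hv
  have hmnu : AEMeasurable (fun x => ENNReal.ofReal (-(u x))) μ :=
    ENNReal.measurable_ofReal.comp_aemeasurable hu.neg
  have hmnv : AEMeasurable (fun x => ENNReal.ofReal (-(v x))) μ :=
    ENNReal.measurable_ofReal.comp_aemeasurable hv.neg
  have hms : AEMeasurable (fun x => ENNReal.ofReal (u x + v x)) μ :=
    ENNReal.measurable_ofReal.comp_aemeasurable (hu.add hv)
  have hmns : AEMeasurable (fun x => ENNReal.ofReal (-(u x + v x))) μ :=
    ENNReal.measurable_ofReal.comp_aemeasurable (hu.add hv).neg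
  have hPs' : Ps ≠ ⊤ := by
    refine ne_top_of_le_ne_top (ENNReal.add_ne_top.2 ⟨hPu', hPv'⟩) ?_
    have e0 : (∫⁻ x, (ENNReal.ofReal (u x) + ENNReal.ofReal (v x)) ∂μ) = Pu + Pv := by
      rw [hPu, hPv, MeasureTheory.lintegral_add_left' hmu]
    rw [hPs, ← e0]
    exact MeasureTheory.lintegral_mono fun x => ENNReal.ofReal_add_le
  have key : Ps + (Nu + Nv) = Ns + (Pu + Pv) := by
    have e1 : (∫⁻ x, (ENNReal.ofReal (u x + v x)
          + (ENNReal.ofReal (-(u x)) + ENNReal.ofReal (-(v x)))) ∂μ) = Ps + (Nu + Nv) := by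
      rw [hPs, hNu, hNv, MeasureTheory.lintegral_add_left' hms,
        MeasureTheory.lintegral_add_left' hmnu]
    have e2 : (∫⁻ x, (ENNReal.ofReal (-(u x + v x))
          + (ENNReal.ofReal (u x) + ENNReal.ofReal (v x))) ∂μ) = Ns + (Pu + Pv) := by
      rw [hNs, hPu, hPv, MeasureTheory.lintegral_add_left' hmns,
        MeasureTheory.lintegral_add_left' hmu]
    rw [← e1, ← e2]
    exact MeasureTheory.lintegral_congr fun x => ofReal_add_identity (u x) (v x)
  show (Ps : EReal) - (Ns : EReal) ≤ ((Pu : EReal) - Nu) + ((Pv : EReal) - Nv)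
  by_cases hNu' : Nu = ⊤
  · have hNs' : Ns = ⊤ := by
      by_contra hc
      have : Ns + (Pu + Pv) ≠ ⊤ := by
        simp [ENNReal.add_ne_top, hc, hPu', hPv']
      rw [← key] at this
      simp [ENNReal.add_eq_top, hNu'] at this
    rw [hNs', hNu', EReal.coe_ennreal_top, EReal.sub_top, EReal.sub_top, EReal.bot_add]
  by_cases hNv' : Nv = ⊤
  · have hNs' : Ns = ⊤ := by
      by_contra hc
      have : Ns + (Pu + Pv) ≠ ⊤ := by
        simp [ENNReal.add_ne_top, hc, hPu', hPv']
      rw [← key] at this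
      simp [ENNReal.add_eq_top, hNv'] at this
    rw [hNs', hNv', EReal.coe_ennreal_top, EReal.sub_top, EReal.sub_top, EReal.add_bot]
  have hNs' : Ns ≠ ⊤ := by
    intro hc
    have : Ps + (Nu + Nv) ≠ ⊤ := by simp [ENNReal.add_ne_top, hPs', hNu', hNv']
    rw [key] at this
    simp [ENNReal.add_eq_top, hc] at this
  have keyR : Ps.toReal + (Nu.toReal + Nv.toReal) = Ns.toReal + (Pu.toReal + Pv.toReal) := by
    have := congrArg ENNReal.toReal key
    rwa [ENNReal.toReal_add hPs' (ENNReal.add_ne_top.2 ⟨hNu', hNv'⟩),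
      ENNReal.toReal_add hNu' hNv',
      ENNReal.toReal_add hNs' (ENNReal.add_ne_top.2 ⟨hPu', hPv'⟩),
      ENNReal.toReal_add hPu' hPv'] at this
  rw [ereal_sub_ennreal hPs' hNs', ereal_sub_ennreal hPu' hNu', ereal_sub_ennreal hPv' hNv',
    ← EReal.coe_add, EReal.coe_le_coe_iff]
  linarith

lemma integrable_of_lintegrals_ne_top {g : X → ℝ}
    (hg : MeasureTheory.AEStronglyMeasurable g μ)
    (hP : ∫⁻ x, ENNReal.ofReal (g x) ∂μ ≠ ⊤)
    (hN : ∫⁻ x, ENNReal.ofReal (-(g x)) ∂μ ≠ ⊤) :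
    MeasureTheory.Integrable g μ := by
  refine ⟨hg, ?_⟩
  show (∫⁻ x, (‖g x‖₊ : ℝ≥0∞) ∂μ) < ⊤
  have hpt : ∀ x, (‖g x‖₊ : ℝ≥0∞) = ENNReal.ofReal (g x) + ENNReal.ofReal (-(g x)) := by
    intro x
    rcases le_total 0 (g x) with h | h
    · rw [← enorm_eq_nnnorm, Real.enorm_eq_ofReal_abs, abs_of_nonneg h,
        ENNReal.ofReal_of_nonpos (show -(g x) ≤ 0 by linarith), add_zero]
    · rw [← enorm_eq_nnnorm, Real.enorm_eq_ofReal_abs, abs_of_nonpos h,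
        ENNReal.ofReal_of_nonpos h, zero_add]
  have hma : AEMeasurable (fun x => ENNReal.ofReal (g x)) μ :=
    ENNReal.measurable_ofReal.comp_aemeasurable hg.aemeasurable
  rw [MeasureTheory.lintegral_congr hpt, MeasureTheory.lintegral_add_left' hma]
  exact lt_top_iff_ne_top.2 (ENNReal.add_ne_top.2 ⟨hP, hN⟩)

lemma ofReal_max_nonpos (z c : ℝ) (hc : c ≤ 0) :
    ENNReal.ofReal (max z c) = ENNReal.ofReal z := by
  rcases le_total z c with h | h
  · rw [max_eq_right h, ENNReal.ofReal_of_nonpos hc, ENNReal.ofReal_of_nonpos (h.trans hc)]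
  · rw [max_eq_left h]

lemma max_max_zero (gx c : ℝ) (hc : c ≤ 0) : max (max gx c) 0 = max gx 0 := by
  rw [max_assoc, max_eq_right hc]

lemma max_trunc_ineq {F a b p s t c : ℝ} (hF : F ≤ a + p + b) (hp : 0 ≤ p) (hs : s ≤ c) :
    max F (s + t) ≤ max a c + p + max b t := by
  have h2 : max (a + p + b) (s + t) ≤ max (a + p) s + max b t := by
    apply max_le
    · exact add_le_add (le_max_left _ _) (le_max_left _ _)
    · exact add_le_add (le_max_right _ _) (le_max_right _ _)
  have h3 : max (a + p) s ≤ max a c + p := by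
    apply max_le
    · exact add_le_add_left (le_max_left _ _) p
    · calc s ≤ c := hs
        _ ≤ max a c := le_max_right _ _
        _ ≤ max a c + p := le_add_of_nonneg_right hp
  calc max F (s + t) ≤ max (a + p + b) (s + t) := max_le_max hF le_rfl
    _ ≤ max (a + p) s + max b t := h2
    _ ≤ max a c + p + max b t := by linarith

lemma integrable_max_const [MeasureTheory.IsFiniteMeasure μ]
    {g : X → ℝ} (hg : Measurable g)
    (hgi : MeasureTheory.Integrable (fun x => max (g x) 0) μ) (c : ℝ) (hc : c ≤ 0) :
    MeasureTheory.Integrable (fun x => max (g x) c) μ := by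
  apply MeasureTheory.Integrable.mono'
    (hgi.add (MeasureTheory.integrable_const |c|))
    (hg.max measurable_const).aestronglyMeasurable
  refine MeasureTheory.ae_of_all μ fun x => ?_
  simp only [Pi.add_apply, Real.norm_eq_abs]
  have habs : |c| = -c := abs_of_nonpos hc
  have h0 : (0:ℝ) ≤ max (g x) 0 := le_max_right _ _
  have h1 := le_max_left (g x) (0:ℝ)
  rw [abs_le]
  constructor
  · have := le_max_right (g x) c
    linarith
  · apply max_le
    · linarith [abs_nonneg c]
    · linarith

lemma tendsto_coe_atBot' {v : ℕ → ℝ} (h : Filter.Tendsto v Filter.atTop Filter.atBot) :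
    Filter.Tendsto (fun j => ((v j : ℝ) : EReal)) Filter.atTop (nhds ⊥) := by
  rw [EReal.tendsto_nhds_bot_iff_real]
  intro x
  filter_upwards [h.eventually (Filter.eventually_lt_atBot x)] with j hj
  exact_mod_cast hj

lemma div_nat_lt_top {x : EReal} (hx : x ≠ ⊤) {n : ℕ} (hn : 1 ≤ n) : x / (n : EReal) < ⊤ := by
  induction x with
  | bot => rw [bot_div_nat hn]; exact bot_lt_top
  | coe y => rw [← natCast_ereal_eq, ← EReal.coe_div]; exact EReal.coe_lt_top _
  | top => exact absurd rfl hx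

lemma coe_term (Bv rv : ℝ) (K : ℕ) :
    ((Bv : EReal) + (rv : EReal)) / ((K : ℕ) : EReal) = (((Bv + rv)/(K:ℝ) : ℝ) : EReal) := by
  rw [← EReal.coe_add, ← natCast_ereal_eq, ← EReal.coe_div]

lemma tendsto_integral_max_of_integrable [MeasureTheory.IsFiniteMeasure μ]
    {g : X → ℝ} (hg : Measurable g) (hgi : MeasureTheory.Integrable g μ) (n : ℕ) (hn : 1 ≤ n) :
    Filter.Tendsto (fun j : ℕ => ∫ x, max (g x) (-(n:ℝ) * ((j:ℝ)+1)) ∂μ) Filter.atTop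
      (nhds (∫ x, g x ∂μ)) := by
  apply MeasureTheory.tendsto_integral_of_dominated_convergence
    (bound := fun x => |g x| + n)
  · exact fun j => (hg.max measurable_const).aestronglyMeasurable
  · exact hgi.abs.add (MeasureTheory.integrable_const _)
  · intro j
    refine MeasureTheory.ae_of_all μ fun x => ?_
    rw [Real.norm_eq_abs, abs_le]
    have hnn : (0:ℝ) ≤ (n:ℝ) := by positivity
    have hcj : (0:ℝ) ≤ (n:ℝ) * ((j:ℝ)+1) := by positivity
    constructor
    · have h1 := neg_abs_le (g x)
      have h2 := le_max_left (g x) (-(n:ℝ) * ((j:ℝ)+1))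
      linarith
    · apply max_le
      · linarith [le_abs_self (g x)]
      · linarith [abs_nonneg (g x)]
  · refine MeasureTheory.ae_of_all μ fun x => ?_
    obtain ⟨J, hJ⟩ := exists_nat_ge (-(g x))
    apply tendsto_const_nhds.congr'
    filter_upwards [Filter.eventually_ge_atTop J] with j hj
    have h2 : (1:ℝ) ≤ (n:ℝ) := by exact_mod_cast hn
    have hjJ : (J:ℝ) ≤ (j:ℝ) := by exact_mod_cast hj
    have h3 : (j:ℝ)+1 ≤ (n:ℝ)*((j:ℝ)+1) := le_mul_of_one_le_left (by positivity) h2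
    have hle : -(n:ℝ) * ((j:ℝ)+1) ≤ g x := by
      have : -(n:ℝ) * ((j:ℝ)+1) = -((n:ℝ)*((j:ℝ)+1)) := by ring
      rw [this]
      linarith
    rw [max_eq_left hle]

lemma tendsto_integral_max_atBot [MeasureTheory.IsFiniteMeasure μ]
    {g : X → ℝ} (hg : Measurable g)
    (hgi : MeasureTheory.Integrable (fun x => max (g x) 0) μ)
    (hN : ∫⁻ x, ENNReal.ofReal (-(g x)) ∂μ = ⊤) (n : ℕ) (hn : 1 ≤ n) :
    Filter.Tendsto (fun j : ℕ => ∫ x, max (g x) (-(n:ℝ) * ((j:ℝ)+1)) ∂μ) Filter.atTop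
      Filter.atBot := by
  set c : ℕ → ℝ := fun j => -(n:ℝ) * ((j:ℝ)+1) with hcdef
  have hc0 : ∀ j, c j ≤ 0 := fun j => by
    have : (0:ℝ) ≤ (n:ℝ) * ((j:ℝ)+1) := by positivity
    simp only [hcdef]
    linarith
  have hint : ∀ j, MeasureTheory.Integrable (fun x => max (g x) (c j)) μ := fun j =>
    integrable_max_const hg hgi (c j) (hc0 j)
  set P := ∫⁻ x, ENNReal.ofReal (g x) ∂μ with hPdef
  have hP' : P ≠ ⊤ := pos_lintegral_ne_top hgi
  set N : ℕ → ℝ≥0∞ := fun j => ∫⁻ x, ENNReal.ofReal (-(max (g x) (c j))) ∂μ with hNdef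
  have hNj' : ∀ j, N j ≠ ⊤ := by
    intro j
    have := lintegral_ofReal_ne_top_of_integrable (hint j).neg
    simpa using this
  have hmonoc : ∀ i j : ℕ, i ≤ j → c j ≤ c i := by
    intro i j hij
    simp only [hcdef]
    have h1 : (i:ℝ) ≤ (j:ℝ) := by exact_mod_cast hij
    nlinarith [show (0:ℝ) ≤ (n:ℝ) by positivity]
  have hmono : Monotone N := by
    intro i j hij
    refine MeasureTheory.lintegral_mono fun x => ENNReal.ofReal_le_ofReal ?_
    exact neg_le_neg (max_le_max le_rfl (hmonoc i j hij))
  have hmonoF : Monotone (fun j : ℕ => fun x => ENNReal.ofReal (-(max (g x) (c j)))) := by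
    intro i j hij x
    exact ENNReal.ofReal_le_ofReal (neg_le_neg (max_le_max le_rfl (hmonoc i j hij)))
  have hpt : ∀ x, (⨆ j, ENNReal.ofReal (-(max (g x) (c j)))) = ENNReal.ofReal (-(g x)) := by
    intro x
    apply le_antisymm
    · exact iSup_le fun j =>
        ENNReal.ofReal_le_ofReal (neg_le_neg (le_max_left (g x) (c j)))
    · obtain ⟨J, hJ⟩ := exists_nat_ge (-(g x))
      have h2 : (1:ℝ) ≤ (n:ℝ) := by exact_mod_cast hn
      have h3 : (J:ℝ)+1 ≤ (n:ℝ)*((J:ℝ)+1) := le_mul_of_one_le_left (by positivity) h2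
      have hcg : c J ≤ g x := by
        simp only [hcdef]
        have : -(n:ℝ) * ((J:ℝ)+1) = -((n:ℝ)*((J:ℝ)+1)) := by ring
        rw [this]
        linarith
      refine le_iSup_of_le J (le_of_eq ?_)
      rw [max_eq_left hcg]
  have hsup : (⨆ j, N j) = ⊤ := by
    have hmeasF : ∀ j : ℕ, Measurable (fun x => ENNReal.ofReal (-(max (g x) (c j)))) :=
      fun j => ENNReal.measurable_ofReal.comp ((hg.max measurable_const).neg)
    have e1 : (⨆ j, N j) = ∫⁻ x, (⨆ j, ENNReal.ofReal (-(max (g x) (c j)))) ∂μ := by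
      rw [hNdef, ← MeasureTheory.lintegral_iSup hmeasF hmonoF]
    rw [e1, MeasureTheory.lintegral_congr hpt, hN]
  have hBj : ∀ j, ∫ x, max (g x) (c j) ∂μ = P.toReal - (N j).toReal := by
    intro j
    rw [MeasureTheory.integral_eq_lintegral_pos_part_sub_lintegral_neg_part (hint j)]
    congr 2
    rw [hPdef]
    exact MeasureTheory.lintegral_congr fun x => ofReal_max_nonpos (g x) (c j) (hc0 j)
  have hmain : Filter.Tendsto (fun j => P.toReal - (N j).toReal) Filter.atTop Filter.atBot := by
    rw [Filter.tendsto_atBot]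
    intro b
    have hlt : ENNReal.ofReal (P.toReal - b) < ⨆ j, N j := by
      rw [hsup]
      exact ENNReal.ofReal_lt_top
    obtain ⟨j0, hj0⟩ := lt_iSup_iff.1 hlt
    refine Filter.eventually_atTop.2 ⟨j0, fun j hj => ?_⟩
    have h1 : ENNReal.ofReal (P.toReal - b) ≤ N j := hj0.le.trans (hmono hj)
    have h2 : P.toReal - b ≤ (N j).toReal := by
      rcases le_total (P.toReal - b) 0 with h | h
      · exact h.trans ENNReal.toReal_nonneg
      · have := ENNReal.toReal_mono (hNj' j) h1
        rwa [ENNReal.toReal_ofReal h] at this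
    linarith
  exact hmain.congr fun j => (hBj j).symm

end MeasureAux
end GSAux

/-- **Step 1 of the L¹ gapped almost subadditive ergodic theorem.**  Under the
hypotheses of the L¹ gapped almost subadditive ergodic theorem, the limit
`lim_n (1/n) ∫ f_n dμ` exists in `[-∞, ∞)` and equals
`lim_{ε→0⁺} lim_n (1/n) ∫ max{f_n, -nε⁻¹} dμ`, where for each `ε > 0` the inner limit
exists in `[-∞, ∞)`. -/
theorem gapped_subadditive_L1_step1
    {X : Type*} [MeasurableSpace X] (μ : Measure X) [IsProbabilityMeasure μ]
    (T : X → X) (hT : MeasurePreserving T μ μ)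
    (f : ℕ → X → ℝ) (hf_meas : ∀ n, 1 ≤ n → Measurable (f n))
    (hf_int : ∀ n, 1 ≤ n → Integrable (fun x => max (f n x) 0) μ)
    (σ : ℕ → ℕ) (hσ1 : σ 1 = 0)
    (hσ : Filter.Tendsto (fun n => (σ n : ℝ) / n) Filter.atTop (𝓝 0))
    (ρ : ℕ → X → ℝ) (hρ_nonneg : ∀ n, 1 ≤ n → ∀ x, 0 ≤ ρ n x)
    (hρ_int : ∀ n, 1 ≤ n → Integrable (ρ n) μ)
    (hsub : ∀ n m, 1 ≤ n → 1 ≤ m → ∀ᵐ x ∂μ,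
      f (n + σ n + m) x ≤ f n x + ρ n x + f m (T^[n + σ n] x))
    (hρ0 : ∀ᵐ x ∂μ, Filter.Tendsto (fun n => ρ n x / n) Filter.atTop (𝓝 0))
    (hρint0 : Filter.Tendsto (fun n : ℕ => (1 / (n : ℝ)) * ∫ x, ρ n x ∂μ)
      Filter.atTop (𝓝 0)) :
    ∃ L : EReal, L < ⊤ ∧
      Filter.Tendsto (fun n : ℕ => erealIntegralReal μ (f n) / (n : EReal))
        Filter.atTop (𝓝 L) ∧
      ∃ G : ℝ → EReal,
        (∀ ε : ℝ, 0 < ε → G ε < ⊤ ∧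
          Filter.Tendsto
            (fun n : ℕ =>
              erealIntegralReal μ (fun x => max (f n x) (-(n : ℝ) * ε⁻¹)) / (n : EReal))
            Filter.atTop (𝓝 (G ε))) ∧
        Filter.Tendsto G (nhdsWithin 0 (Set.Ioi 0)) (𝓝 L) := by
  classical
  set r : ℕ → ℝ := fun n => ∫ x, ρ n x ∂μ with hrdef
  have hr0 : ∀ n, 1 ≤ n → 0 ≤ r n := fun n hn => integral_nonneg (hρ_nonneg n hn)
  have hrlim : Tendsto (fun n : ℕ => r n / n) atTop (𝓝 0) :=
    hρint0.congr fun n => by rw [one_div, inv_mul_eq_div]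
  set a : ℕ → EReal := fun n => erealIntegralReal μ (f n) with hadef
  have ha_top : ∀ n, 1 ≤ n → a n ≠ ⊤ := fun n hn =>
    (GSAux.erealIntegralReal_lt_top (hf_int n hn)).ne
  have hIρ : ∀ n, 1 ≤ n → erealIntegralReal μ (ρ n) = ((r n : ℝ) : EReal) := fun n hn =>
    GSAux.erealIntegralReal_eq_integral (hρ_int n hn)
  have hρ_pos_int : ∀ n, 1 ≤ n → Integrable (fun x => max (ρ n x) 0) μ := fun n hn =>
    (hρ_int n hn).congr (ae_of_all μ fun x => (max_eq_left (hρ_nonneg n hn x)).symm)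
  have hfmT_meas : ∀ m k, 1 ≤ m → Measurable (fun x => f m (T^[k] x)) := fun m k hm =>
    (hf_meas m hm).comp (hT.iterate k).measurable
  have hfmT_pos_int : ∀ m k, 1 ≤ m → Integrable (fun x => max (f m (T^[k] x)) 0) μ :=
    fun m k hm =>
      ((hT.iterate k).integrable_comp (hf_int m hm).aestronglyMeasurable).2 (hf_int m hm)
  -- subadditivity for a
  have hsuba : ∀ n m, 1 ≤ n → 1 ≤ m → a (n + σ n + m) ≤ a n + (r n : EReal) + a m := by
    intro n m hn hm
    have h1 : a (n + σ n + m)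
        ≤ erealIntegralReal μ (fun x => f n x + (ρ n x + f m (T^[n + σ n] x))) := by
      apply GSAux.erealIntegralReal_mono
      filter_upwards [hsub n m hn hm] with x hx
      linarith
    have hvmeas : AEMeasurable (fun x => ρ n x + f m (T^[n + σ n] x)) μ :=
      (hρ_int n hn).aemeasurable.add (hfmT_meas m (n + σ n) hm).aemeasurable
    have hv_posint : Integrable (fun x => max (ρ n x + f m (T^[n + σ n] x)) 0) μ := by
      apply Integrable.mono' ((hρ_int n hn).add (hfmT_pos_int m (n + σ n) hm))
        (hvmeas.max aemeasurable_const).aestronglyMeasurable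
      refine ae_of_all μ fun x => ?_
      simp only [Pi.add_apply, Real.norm_eq_abs]
      rw [abs_of_nonneg (le_max_right _ _)]
      apply max_le
      · exact add_le_add le_rfl (le_max_left _ _)
      · exact add_nonneg (hρ_nonneg n hn x) (le_max_right _ _)
    have h2 := GSAux.erealIntegralReal_add_le (hf_meas n hn).aemeasurable hvmeas
      (hf_int n hn) hv_posint
    have h3 := GSAux.erealIntegralReal_add_le (hρ_int n hn).aemeasurable
      (hfmT_meas m (n + σ n) hm).aemeasurable (hρ_pos_int n hn) (hfmT_pos_int m (n + σ n) hm)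
    have h4 : erealIntegralReal μ (fun x => f m (T^[n + σ n] x)) = a m :=
      GSAux.erealIntegralReal_comp_iterate hT (n + σ n) (hf_meas m hm)
    calc a (n + σ n + m) ≤ _ := h1
      _ ≤ _ := h2
      _ ≤ erealIntegralReal μ (f n) + (erealIntegralReal μ (ρ n)
            + erealIntegralReal μ (fun x => f m (T^[n + σ n] x))) := add_le_add_right h3 _
      _ = a n + (r n : EReal) + a m := by rw [hIρ n hn, h4, ← add_assoc]
  -- truncated family
  set b : ℝ → ℕ → EReal := fun ε n =>
    erealIntegralReal μ (fun x => max (f n x) (-(n : ℝ) * ε⁻¹)) with hbdef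
  have hcneg : ∀ ε : ℝ, 0 < ε → ∀ n : ℕ, -(n : ℝ) * ε⁻¹ ≤ 0 := by
    intro ε hε n
    have h1 : (0:ℝ) ≤ (n : ℝ) * ε⁻¹ := by positivity
    linarith
  have hb_posint : ∀ ε : ℝ, 0 < ε → ∀ n, 1 ≤ n →
      Integrable (fun x => max (max (f n x) (-(n : ℝ) * ε⁻¹)) 0) μ := fun ε hε n hn =>
    (hf_int n hn).congr
      (ae_of_all μ fun x => (GSAux.max_max_zero (f n x) _ (hcneg ε hε n)).symm)
  have hb_top : ∀ ε : ℝ, 0 < ε → ∀ n, 1 ≤ n → b ε n ≠ ⊤ := fun ε hε n hn =>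
    (GSAux.erealIntegralReal_lt_top (hb_posint ε hε n hn)).ne
  have hb_int : ∀ ε : ℝ, 0 < ε → ∀ n, 1 ≤ n →
      Integrable (fun x => max (f n x) (-(n : ℝ) * ε⁻¹)) μ := fun ε hε n hn =>
    GSAux.integrable_max_const (hf_meas n hn) (hf_int n hn) _ (hcneg ε hε n)
  have hsubb : ∀ ε : ℝ, 0 < ε → ∀ n m, 1 ≤ n → 1 ≤ m →
      b ε (n + σ n + m) ≤ b ε n + (r n : EReal) + b ε m := by
    intro ε hε n m hn hm
    have hae : ∀ᵐ x ∂μ, max (f (n + σ n + m) x) (-((n + σ n + m : ℕ) : ℝ) * ε⁻¹)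
        ≤ max (f n x) (-(n : ℝ) * ε⁻¹)
          + (ρ n x + max (f m (T^[n + σ n] x)) (-(m : ℝ) * ε⁻¹)) := by
      filter_upwards [hsub n m hn hm] with x hx
      have hsplit : -((n + σ n + m : ℕ) : ℝ) * ε⁻¹
          = (-((n + σ n : ℕ) : ℝ) * ε⁻¹) + (-(m : ℝ) * ε⁻¹) := by push_cast; ring
      rw [hsplit]
      have hsc : -((n + σ n : ℕ) : ℝ) * ε⁻¹ ≤ -(n : ℝ) * ε⁻¹ := by
        apply mul_le_mul_of_nonneg_right _ (le_of_lt (inv_pos.2 hε))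
        push_cast
        have := Nat.cast_nonneg (α := ℝ) (σ n)
        linarith
      have := GSAux.max_trunc_ineq (t := -(m:ℝ) * ε⁻¹) hx (hρ_nonneg n hn x) hsc
      linarith
    have h1 : b ε (n + σ n + m)
        ≤ erealIntegralReal μ (fun x => max (f n x) (-(n : ℝ) * ε⁻¹)
            + (ρ n x + max (f m (T^[n + σ n] x)) (-(m : ℝ) * ε⁻¹))) :=
      GSAux.erealIntegralReal_mono hae
    have hwmeas : Measurable (fun x => max (f m (T^[n + σ n] x)) (-(m : ℝ) * ε⁻¹)) :=
      (hfmT_meas m (n + σ n) hm).max measurable_const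
    have hw_posint :
        Integrable (fun x => max (max (f m (T^[n + σ n] x)) (-(m : ℝ) * ε⁻¹)) 0) μ :=
      ((hT.iterate (n + σ n)).integrable_comp
        (hb_posint ε hε m hm).aestronglyMeasurable).2 (hb_posint ε hε m hm)
    have hvmeas : AEMeasurable
        (fun x => ρ n x + max (f m (T^[n + σ n] x)) (-(m : ℝ) * ε⁻¹)) μ :=
      (hρ_int n hn).aemeasurable.add hwmeas.aemeasurable
    have hv_posint : Integrable
        (fun x => max (ρ n x + max (f m (T^[n + σ n] x)) (-(m : ℝ) * ε⁻¹)) 0) μ := by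
      apply Integrable.mono' ((hρ_int n hn).add hw_posint)
        (hvmeas.max aemeasurable_const).aestronglyMeasurable
      refine ae_of_all μ fun x => ?_
      simp only [Pi.add_apply, Real.norm_eq_abs]
      rw [abs_of_nonneg (le_max_right _ _)]
      apply max_le
      · exact add_le_add le_rfl (le_max_left _ _)
      · exact add_nonneg (hρ_nonneg n hn x) (le_max_right _ _)
    have h2 := GSAux.erealIntegralReal_add_le
      ((hf_meas n hn).max measurable_const).aemeasurable hvmeas
      (hb_posint ε hε n hn) hv_posint
    have h3 := GSAux.erealIntegralReal_add_le (hρ_int n hn).aemeasurable hwmeas.aemeasurable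
      (hρ_pos_int n hn) hw_posint
    have h4 : erealIntegralReal μ
        (fun x => max (f m (T^[n + σ n] x)) (-(m : ℝ) * ε⁻¹)) = b ε m :=
      GSAux.erealIntegralReal_comp_iterate hT (n + σ n)
        ((hf_meas m hm).max measurable_const)
    calc b ε (n + σ n + m) ≤ _ := h1
      _ ≤ _ := h2
      _ ≤ b ε n + (erealIntegralReal μ (ρ n) + erealIntegralReal μ
            (fun x => max (f m (T^[n + σ n] x)) (-(m : ℝ) * ε⁻¹))) := add_le_add_right h3 _
      _ = b ε n + (r n : EReal) + b ε m := by rw [hIρ n hn, h4, ← add_assoc]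
  set L : EReal := ⨅ k : ℕ,
    (a (k+1) + (r (k+1) : EReal)) / (((k+1) + σ (k+1) : ℕ) : EReal) with hLdef
  set G : ℝ → EReal := fun ε => ⨅ k : ℕ,
    (b ε (k+1) + (r (k+1) : EReal)) / (((k+1) + σ (k+1) : ℕ) : EReal) with hGdef
  have hLtop : L < ⊤ := by
    refine lt_of_le_of_lt (iInf_le _ 0) ?_
    exact GSAux.div_nat_lt_top
      (EReal.add_lt_top (ha_top 1 le_rfl) (EReal.coe_ne_top (r 1))).ne (by omega)
  refine ⟨L, hLtop, GSAux.fekete a σ r ha_top hσ hrlim hsuba, G, fun ε hε => ⟨?_, ?_⟩, ?_⟩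
  · refine lt_of_le_of_lt (iInf_le _ 0) ?_
    exact GSAux.div_nat_lt_top
      (EReal.add_lt_top (hb_top ε hε 1 le_rfl) (EReal.coe_ne_top (r 1))).ne (by omega)
  · exact GSAux.fekete (b ε) σ r (hb_top ε hε) hσ hrlim (hsubb ε hε)
  -- the limit as ε → 0⁺
  have hmonoG : MonotoneOn G (Set.Ioi (0:ℝ)) := by
    intro ε1 h1 ε2 h2 h12
    apply iInf_mono
    intro k
    have hb_le : b ε1 (k+1) ≤ b ε2 (k+1) := by
      apply GSAux.erealIntegralReal_mono
      refine ae_of_all μ fun x => ?_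
      apply max_le_max le_rfl
      have hinv : ε2⁻¹ ≤ ε1⁻¹ := inv_anti₀ h1 h12
      have hn0 : (0:ℝ) ≤ ((k+1 : ℕ) : ℝ) := by positivity
      nlinarith
    exact EReal.div_le_div_right_of_nonneg (GSAux.ereal_natCast_pos (by omega)).le
      (add_le_add hb_le le_rfl)
  have htend := hmonoG.tendsto_nhdsGT (OrderBot.bddBelow _)
  have hS : sInf (G '' Set.Ioi (0:ℝ)) = L := by
    apply le_antisymm
    · rw [hLdef]
      refine le_iInf fun k => ?_
      have hn : 1 ≤ k + 1 := by omega
      set es : ℕ → ℝ := fun j => ((j:ℝ)+1)⁻¹ with hesdef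
      have hes_pos : ∀ j, 0 < es j := fun j => by positivity
      have hB2 : ∀ j, b (es j) (k+1)
          = ((∫ x, max (f (k+1) x) (-((k+1 : ℕ) : ℝ) * ((j:ℝ)+1)) ∂μ : ℝ) : EReal) := by
        intro j
        have hinv : (es j)⁻¹ = (j:ℝ)+1 := by rw [hesdef]; simp
        rw [hbdef]
        simp only [hinv]
        exact GSAux.erealIntegralReal_eq_integral (by
          apply GSAux.integrable_max_const (hf_meas (k+1) hn) (hf_int (k+1) hn)
          have h1 : (0:ℝ) ≤ ((k+1 : ℕ) : ℝ) * ((j:ℝ)+1) := by positivity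
          linarith)
      have hKpos : (0:ℝ) < (((k+1) + σ (k+1) : ℕ) : ℝ) := by positivity
      have hterm : Tendsto (fun j => (b (es j) (k+1) + (r (k+1) : EReal))
            / (((k+1) + σ (k+1) : ℕ) : EReal)) atTop
          (𝓝 ((a (k+1) + (r (k+1) : EReal)) / (((k+1) + σ (k+1) : ℕ) : EReal))) := by
        by_cases hfi : Integrable (f (k+1)) μ
        · have hconv := GSAux.tendsto_integral_max_of_integrable (hf_meas (k+1) hn) hfi
            (k+1) hn
          have ha_eq : a (k+1) = ((∫ x, f (k+1) x ∂μ : ℝ) : EReal) :=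
            GSAux.erealIntegralReal_eq_integral hfi
          rw [ha_eq, GSAux.coe_term]
          have hreal := (hconv.add (tendsto_const_nhds (x := r (k+1)))).div_const
            ((((k+1) + σ (k+1) : ℕ) : ℝ))
          exact (EReal.tendsto_coe.2 hreal).congr fun j => by
            rw [hB2 j, GSAux.coe_term]
        · have hNtop : ∫⁻ x, ENNReal.ofReal (-(f (k+1) x)) ∂μ = ⊤ := by
            by_contra hne
            exact hfi (GSAux.integrable_of_lintegrals_ne_top
              (hf_meas (k+1) hn).aestronglyMeasurable
              (GSAux.pos_lintegral_ne_top (hf_int (k+1) hn)) hne)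
          have ha_bot : a (k+1) = ⊥ := by
            rw [hadef]
            show erealIntegralReal μ (f (k+1)) = ⊥
            unfold erealIntegralReal
            rw [hNtop, EReal.coe_ennreal_top, EReal.sub_top]
          have hconv := GSAux.tendsto_integral_max_atBot (hf_meas (k+1) hn)
            (hf_int (k+1) hn) hNtop (k+1) hn
          have hlim_bot : ((a (k+1) + (r (k+1) : EReal))
              / (((k+1) + σ (k+1) : ℕ) : EReal)) = ⊥ := by
            rw [ha_bot, EReal.bot_add, GSAux.bot_div_nat (by omega)]
          rw [hlim_bot]
          have hreal : Tendsto (fun j : ℕ => ((∫ x, max (f (k+1) x)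
                (-((k+1 : ℕ) : ℝ) * ((j:ℝ)+1)) ∂μ) + r (k+1))
              / (((k+1) + σ (k+1) : ℕ) : ℝ)) atTop atBot :=
            (tendsto_atBot_add_const_right (atTop : Filter ℕ) (r (k+1)) hconv).atBot_div_const hKpos
          exact (GSAux.tendsto_coe_atBot' hreal).congr fun j => by
            rw [hB2 j, GSAux.coe_term]
      have hsle : ∀ j : ℕ, sInf (G '' Set.Ioi (0:ℝ))
          ≤ (b (es j) (k+1) + (r (k+1) : EReal)) / (((k+1) + σ (k+1) : ℕ) : EReal) := by
        intro j
        calc sInf (G '' Set.Ioi (0:ℝ)) ≤ G (es j) := sInf_le ⟨es j, hes_pos j, rfl⟩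
          _ ≤ _ := iInf_le _ k
      exact ge_of_tendsto hterm (Eventually.of_forall hsle)
    · apply le_sInf
      rintro y ⟨ε, hε, rfl⟩
      apply iInf_mono
      intro k
      apply EReal.div_le_div_right_of_nonneg (GSAux.ereal_natCast_pos (by omega)).le
      apply add_le_add _ le_rfl
      apply GSAux.erealIntegralReal_mono
      exact ae_of_all μ fun x => le_max_left _ _
  rw [← hS]
  exact htend
end

section
/- Assume the hypotheses of the L¹ gapped almost subadditive ergodic theorem: (X, 𝓕, μ, T) a measure-preserving dynamical system with μ a probability measure; (f_n)_{n∈ℕ} measurable real-valued functions with positive parts f_{n,+} ∈ L¹(dμ); (σ_n)_{n∈ℕ} nonnegative integers with σ_1 = 0 and σ_n/n → 0; (ρ_n)_{n∈ℕ} nonnegative L¹(dμ) functions with f_{n+σ_n+m} ≤ f_n + ρ_n + f_m ∘ T^{n+σ_n} μ-a.s. for all n, m ∈ ℕ, ρ_n/n → 0 μ-a.s., and (1/n)∫ρ_n dμ → 0. Let f(x) := lim_{n→∞} f_n(x)/n (the μ-almost sure limit, valued in [-∞, ∞)). Then the positive part f_+ = max{f, 0} belongs to L¹(dμ), and lim_{n→∞}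 (1/n) ∫ f_{n,+} dμ = ∫ f_+ dμ. -/
open Filter Topology MeasureTheory ENNReal

/-- **Step 2 of the L¹ gapped almost subadditive ergodic theorem.**  Under the
hypotheses of the L¹ gapped almost subadditive ergodic theorem, with `f` the μ-a.s.
limit of `f_n/n` (valued in `[-∞, ∞)`), the positive part `f₊ = max{f, 0}` belongs to
`L¹(dμ)` and `lim_n (1/n) ∫ f_{n,+} dμ = ∫ f₊ dμ`. -/
theorem gapped_subadditive_L1_step2
    {X : Type*} [MeasurableSpace X] (μ : Measure X) [IsProbabilityMeasure μ]
    (T : X → X) (hT : MeasurePreserving T μ μ)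
    (f : ℕ → X → ℝ) (hf_meas : ∀ n, 1 ≤ n → Measurable (f n))
    (hf_int : ∀ n, 1 ≤ n → Integrable (fun x => max (f n x) 0) μ)
    (σ : ℕ → ℕ) (hσ1 : σ 1 = 0)
    (hσ : Filter.Tendsto (fun n => (σ n : ℝ) / n) Filter.atTop (𝓝 0))
    (ρ : ℕ → X → ℝ) (hρ_nonneg : ∀ n, 1 ≤ n → ∀ x, 0 ≤ ρ n x)
    (hρ_int : ∀ n, 1 ≤ n → Integrable (ρ n) μ)
    (hsub : ∀ n m, 1 ≤ n → 1 ≤ m → ∀ᵐ x ∂μ,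
      f (n + σ n + m) x ≤ f n x + ρ n x + f m (T^[n + σ n] x))
    (hρ0 : ∀ᵐ x ∂μ, Filter.Tendsto (fun n => ρ n x / n) Filter.atTop (𝓝 0))
    (hρint0 : Filter.Tendsto (fun n : ℕ => (1 / (n : ℝ)) * ∫ x, ρ n x ∂μ)
      Filter.atTop (𝓝 0))
    (F : X → EReal) (hF_meas : Measurable F) (hF_top : ∀ᵐ x ∂μ, F x < ⊤)
    (hF_lim : ∀ᵐ x ∂μ, Filter.Tendsto (fun n : ℕ => ((f n x : EReal) / (n : EReal)))
      Filter.atTop (𝓝 (F x))) :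
    Integrable (fun x => (max (F x) 0).toReal) μ ∧
      Filter.Tendsto (fun n : ℕ => (1 / (n : ℝ)) * ∫ x, max (f n x) 0 ∂μ)
        Filter.atTop (𝓝 (∫ x, (max (F x) 0).toReal ∂μ)) := by
  classical
  -- The dominating function `h` and its measurable ENNReal version `H`.
  have hρ1 := hρ_nonneg 1 le_rfl
  set h : X → ℝ := fun x => max (f 1 x) 0 + ρ 1 x with hh_def
  have hh_nonneg : ∀ x, 0 ≤ h x := fun x => add_nonneg (le_max_right _ _) (hρ1 x)
  have hh_int : Integrable h μ := (hf_int 1 le_rfl).add (hρ_int 1 le_rfl)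
  have hh_aesm : AEStronglyMeasurable h μ := hh_int.1
  set h₀ : X → ℝ := hh_aesm.mk h with hh₀_def
  have hh₀_meas : Measurable h₀ := hh_aesm.stronglyMeasurable_mk.measurable
  have hh_eq : h =ᵐ[μ] h₀ := hh_aesm.ae_eq_mk
  set H : X → ℝ≥0∞ := fun x => ENNReal.ofReal (h₀ x) with hH_def
  have hH_meas : Measurable H := ENNReal.measurable_ofReal.comp hh₀_meas
  have hH_lt_top : ∀ x, H x < ⊤ := fun x => ENNReal.ofReal_lt_top
  have hHh_ae : (fun x => ENNReal.ofReal (h x)) =ᵐ[μ] H :=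
    hh_eq.mono fun x hx => by rw [hH_def]; exact congrArg ENNReal.ofReal hx
  have hH_int : ∫⁻ x, H x ∂μ < ⊤ :=
    calc ∫⁻ x, H x ∂μ = ∫⁻ x, ENNReal.ofReal (h x) ∂μ := (lintegral_congr_ae hHh_ae).symm
      _ < ⊤ := hh_int.lintegral_lt_top
  -- pulling back a.e. statements through iterates of `T`
  have pull : ∀ (j : ℕ) {p : X → Prop}, (∀ᵐ y ∂μ, p y) → ∀ᵐ x ∂μ, p (T^[j] x) := by
    intro j p hp
    apply ae_of_ae_map ((hT.iterate j).measurable.aemeasurable)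
    rwa [(hT.iterate j).map_eq]
  -- Lemma A : domination of `(f n)₊` by Birkhoff sums of `h`
  have lemA : ∀ n : ℕ, ∀ᵐ x ∂μ,
      max (f (n + 1) x) 0 ≤ ∑ j ∈ Finset.range (n + 1), h (T^[j] x) := by
    intro n
    induction n with
    | zero =>
      filter_upwards with x
      simpa [hh_def] using hρ1 x
    | succ n ih =>
      have h1 := hsub 1 (n + 1) le_rfl (Nat.succ_le_succ (Nat.zero_le n))
      rw [hσ1] at h1
      have ih' := pull 1 ih
      filter_upwards [h1, ih'] with x hx hih
      have hx' : f (n + 2) x ≤ f 1 x + ρ 1 x + f (n + 1) (T x) := by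
        simpa [add_comm 1 (n+1)] using hx
      have hih' : max (f (n + 1) (T x)) 0 ≤ ∑ j ∈ Finset.range (n + 1), h (T^[j] (T x)) := by
        simpa using hih
      have step : max (f (n + 2) x) 0
          ≤ h x + max (f (n + 1) (T x)) 0 := by
        have h1x : f 1 x ≤ max (f 1 x) 0 := le_max_left _ _
        have h2x : f (n + 1) (T x) ≤ max (f (n + 1) (T x)) 0 := le_max_left _ _
        have h3x : (0:ℝ) ≤ max (f 1 x) 0 := le_max_right _ _
        have h4x : (0:ℝ) ≤ max (f (n + 1) (T x)) 0 := le_max_right _ _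
        have h5x := hρ1 x
        apply max_le
        · simp only [hh_def]; linarith
        · simp only [hh_def]; linarith
      calc max (f (n + 2) x) 0 ≤ h x + max (f (n + 1) (T x)) 0 := step
        _ ≤ h x + ∑ j ∈ Finset.range (n + 1), h (T^[j] (T x)) := by
            exact add_le_add_right hih' _
        _ = ∑ j ∈ Finset.range (n + 2), h (T^[j] x) := by
            rw [Finset.sum_range_succ' (fun j => h (T^[j] x)) (n + 1)]
            simp [Function.iterate_succ_apply, add_comm]
  -- the normalized sequence
  set G : ℕ → X → ℝ := fun n x => max (f (n + 1) x) 0 / ((n : ℝ) + 1) with hG_def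
  have hG_meas : ∀ n, Measurable (G n) := fun n =>
    ((hf_meas (n + 1) (Nat.succ_le_succ (Nat.zero_le n))).max measurable_const).div_const _
  have hG_nonneg : ∀ n x, 0 ≤ G n x := fun n x =>
    div_nonneg (le_max_right _ _) (by positivity)
  have hG_int : ∀ n, Integrable (G n) μ := fun n =>
    (hf_int (n + 1) (Nat.succ_le_succ (Nat.zero_le n))).div_const _
  -- Lemma B : ENNReal-valued domination
  have hHj : ∀ j : ℕ, ∀ᵐ x ∂μ, ENNReal.ofReal (h (T^[j] x)) = H (T^[j] x) := by
    intro j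
    refine pull j (p := fun y => ENNReal.ofReal (h y) = H y) ?_
    filter_upwards [hh_eq] with y hy
    rw [hH_def]
    exact congrArg ENNReal.ofReal hy
  have e2 : ∀ n : ℕ, ENNReal.ofReal ((n : ℝ) + 1) = (n : ℝ≥0∞) + 1 := by
    intro n
    rw [ENNReal.ofReal_add (by positivity) zero_le_one, ENNReal.ofReal_natCast,
      ENNReal.ofReal_one]
  have lemB : ∀ n : ℕ, ∀ᵐ x ∂μ, ENNReal.ofReal (G n x)
      ≤ (((n : ℝ≥0∞) + 1))⁻¹ * ∑ j ∈ Finset.range (n + 1), H (T^[j] x) := by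
    intro n
    filter_upwards [lemA n, ae_all_iff.2 hHj] with x hx hx2
    have e1 : ENNReal.ofReal (G n x)
        = ENNReal.ofReal (max (f (n + 1) x) 0) / ENNReal.ofReal ((n : ℝ) + 1) := by
      rw [hG_def]
      exact ENNReal.ofReal_div_of_pos (by positivity)
    rw [e1, e2, ENNReal.div_eq_inv_mul]
    refine mul_le_mul_right ?_ _
    calc ENNReal.ofReal (max (f (n + 1) x) 0)
        ≤ ENNReal.ofReal (∑ j ∈ Finset.range (n + 1), h (T^[j] x)) :=
          ENNReal.ofReal_le_ofReal hx
      _ = ∑ j ∈ Finset.range (n + 1), ENNReal.ofReal (h (T^[j] x)) :=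
          ENNReal.ofReal_sum_of_nonneg fun j _ => hh_nonneg _
      _ = ∑ j ∈ Finset.range (n + 1), H (T^[j] x) :=
          Finset.sum_congr rfl fun j _ => hx2 j
  -- integral bound : ∫⁻ ofReal (G n) ≤ ∫⁻ H
  have hc_ne_zero : ∀ n : ℕ, ((n : ℝ≥0∞) + 1) ≠ 0 := fun n => by simp
  have hc_ne_top : ∀ n : ℕ, ((n : ℝ≥0∞) + 1) ≠ ⊤ := fun n => by
    simp [ENNReal.natCast_ne_top]
  have meas_j : ∀ j : ℕ, Measurable fun x => H (T^[j] x) := fun j =>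
    hH_meas.comp (hT.iterate j).measurable
  have intB : ∀ n : ℕ, ∫⁻ x, ENNReal.ofReal (G n x) ∂μ ≤ ∫⁻ x, H x ∂μ := by
    intro n
    calc ∫⁻ x, ENNReal.ofReal (G n x) ∂μ
        ≤ ∫⁻ x, ((n : ℝ≥0∞) + 1)⁻¹ * ∑ j ∈ Finset.range (n + 1), H (T^[j] x) ∂μ :=
          lintegral_mono_ae (lemB n)
      _ = ((n : ℝ≥0∞) + 1)⁻¹ * ∑ j ∈ Finset.range (n + 1), ∫⁻ x, H (T^[j] x) ∂μ := by
          rw [lintegral_const_mul _ (Finset.measurable_sum _ fun j _ => meas_j j),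
            lintegral_finset_sum _ fun j _ => meas_j j]
      _ = ((n : ℝ≥0∞) + 1)⁻¹ * ∑ _j ∈ Finset.range (n + 1), ∫⁻ x, H x ∂μ := by
          congr 1
          exact Finset.sum_congr rfl fun j _ => (hT.iterate j).lintegral_comp hH_meas
      _ = ((n : ℝ≥0∞) + 1)⁻¹ * (((n : ℝ≥0∞) + 1) * ∫⁻ x, H x ∂μ) := by
          rw [Finset.sum_const, Finset.card_range, nsmul_eq_mul]
          push_cast
          ring_nf
      _ = ∫⁻ x, H x ∂μ := by
          rw [← mul_assoc, ENNReal.inv_mul_cancel (hc_ne_zero n) (hc_ne_top n), one_mul]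
  -- uniform integrability
  set tailF : ℕ → X → ℝ≥0∞ := fun M => Set.indicator {y | (M : ℝ≥0∞) < H y} H with htailF_def
  have tailF_meas : ∀ M : ℕ, Measurable (tailF M) := fun M =>
    hH_meas.indicator (measurableSet_lt measurable_const hH_meas)
  set tail : ℕ → ℝ≥0∞ := fun M => ∫⁻ x, tailF M x ∂μ with htail_def
  have tail_tendsto : Tendsto tail atTop (𝓝 0) := by
    have hlim : ∀ᵐ x ∂μ, Tendsto (fun M : ℕ => tailF M x) atTop (𝓝 0) := by
      refine Eventually.of_forall fun x => ?_
      obtain ⟨M₀, hM₀⟩ := exists_nat_ge (h₀ x)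
      have hzero : ∀ M ≥ M₀, tailF M x = 0 := by
        intro M hM
        apply Set.indicator_of_notMem
        simp only [Set.mem_setOf_eq, not_lt]
        calc H x = ENNReal.ofReal (h₀ x) := rfl
          _ ≤ ENNReal.ofReal (M₀ : ℝ) := ENNReal.ofReal_le_ofReal hM₀
          _ = (M₀ : ℝ≥0∞) := ENNReal.ofReal_natCast _
          _ ≤ (M : ℝ≥0∞) := Nat.cast_le.2 hM
      exact Tendsto.congr'
        (eventually_atTop.2 ⟨M₀, fun M hM => (hzero M hM).symm⟩) tendsto_const_nhds
    have := tendsto_lintegral_of_dominated_convergence (μ := μ) H tailF_meas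
      (fun M => Eventually.of_forall fun x => Set.indicator_le_self _ _ x)
      hH_int.ne hlim
    simpa [lintegral_zero] using this
  have key : ∀ (M : ℕ) (j : ℕ) (s : Set X), MeasurableSet s →
      (∫⁻ x, s.indicator (fun _ => (1 : ℝ≥0∞)) x * H (T^[j] x) ∂μ)
        ≤ tail M + (M : ℝ≥0∞) * μ s := by
    intro M j s hs
    have ptw : ∀ x, s.indicator (fun _ => (1 : ℝ≥0∞)) x * H (T^[j] x)
        ≤ tailF M (T^[j] x) + s.indicator (fun _ => (M : ℝ≥0∞)) x := by
      intro x
      by_cases hxs : x ∈ s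
      · simp only [Set.indicator_of_mem hxs, one_mul]
        by_cases hM : (M : ℝ≥0∞) < H (T^[j] x)
        · have he : tailF M (T^[j] x) = H (T^[j] x) := Set.indicator_of_mem (show T^[j] x ∈ {y | (M : ℝ≥0∞) < H y} from hM) H
          rw [he]
          exact le_self_add
        · push_neg at hM
          exact le_add_left hM
      · simp [Set.indicator_of_notMem hxs]
    calc ∫⁻ x, s.indicator (fun _ => (1 : ℝ≥0∞)) x * H (T^[j] x) ∂μ
        ≤ ∫⁻ x, (tailF M (T^[j] x) + s.indicator (fun _ => (M : ℝ≥0∞)) x) ∂μ :=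
          lintegral_mono ptw
      _ = (∫⁻ x, tailF M (T^[j] x) ∂μ) + ∫⁻ x, s.indicator (fun _ => (M : ℝ≥0∞)) x ∂μ :=
          lintegral_add_left ((tailF_meas M).comp (hT.iterate j).measurable) _
      _ = tail M + (M : ℝ≥0∞) * μ s := by
          rw [(hT.iterate j).lintegral_comp (tailF_meas M), lintegral_indicator_const hs]
  have hUI : UnifIntegrable G 1 μ := by
    intro ε hε
    have hε2 : (0 : ℝ) < ε / 2 := by positivity
    obtain ⟨M, hM⟩ := (ENNReal.tendsto_atTop_zero.1 tail_tendsto) (ENNReal.ofReal (ε / 2))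
      (ENNReal.ofReal_pos.2 hε2)
    refine ⟨ε / (2 * ((M : ℝ) + 1)), by positivity, fun i s hs hμs => ?_⟩
    have hbound : ∀ᵐ x ∂μ, (‖s.indicator (G i) x‖₊ : ℝ≥0∞)
        ≤ ((i : ℝ≥0∞) + 1)⁻¹
          * ∑ j ∈ Finset.range (i + 1), s.indicator (fun _ => (1 : ℝ≥0∞)) x * H (T^[j] x) := by
      filter_upwards [lemB i] with x hx
      by_cases hxs : x ∈ s
      · simp only [Set.indicator_of_mem hxs, one_mul]
        rw [← enorm_eq_nnnorm, Real.enorm_eq_ofReal (hG_nonneg i x)]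
        exact hx
      · simp [Set.indicator_of_notMem hxs]
    have meas_terms : ∀ j ∈ Finset.range (i + 1),
        Measurable fun x => s.indicator (fun _ => (1 : ℝ≥0∞)) x * H (T^[j] x) := fun j _ =>
      ((measurable_const.indicator hs).mul (meas_j j))
    have est1 : (M : ℝ≥0∞) * ENNReal.ofReal (ε / (2 * ((M : ℝ) + 1)))
        ≤ ENNReal.ofReal (ε / 2) := by
      rw [← ENNReal.ofReal_natCast, ← ENNReal.ofReal_mul (by positivity)]
      apply ENNReal.ofReal_le_ofReal
      have e4 : (M : ℝ) / ((M : ℝ) + 1) ≤ 1 := by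
        rw [div_le_one (by positivity)]; linarith
      rw [mul_comm, div_mul_eq_mul_div, div_le_div_iff₀ (by positivity) (by norm_num)]
      nlinarith [hε.le, Nat.cast_nonneg (α := ℝ) M]
    calc eLpNorm (s.indicator (G i)) 1 μ
        = ∫⁻ x, ‖s.indicator (G i) x‖₊ ∂μ := eLpNorm_one_eq_lintegral_enorm 
      _ ≤ ∫⁻ x, ((i : ℝ≥0∞) + 1)⁻¹
            * ∑ j ∈ Finset.range (i + 1), s.indicator (fun _ => (1 : ℝ≥0∞)) x * H (T^[j] x) ∂μ :=
          lintegral_mono_ae hbound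
      _ = ((i : ℝ≥0∞) + 1)⁻¹ * ∑ j ∈ Finset.range (i + 1),
            ∫⁻ x, s.indicator (fun _ => (1 : ℝ≥0∞)) x * H (T^[j] x) ∂μ := by
          rw [lintegral_const_mul _ (Finset.measurable_sum _ meas_terms),
            lintegral_finset_sum _ meas_terms]
      _ ≤ ((i : ℝ≥0∞) + 1)⁻¹ * ∑ _j ∈ Finset.range (i + 1), (tail M + (M : ℝ≥0∞) * μ s) :=
          mul_le_mul_right (Finset.sum_le_sum fun j _ => key M j s hs) _
      _ = ((i : ℝ≥0∞) + 1)⁻¹ * (((i : ℝ≥0∞) + 1) * (tail M + (M : ℝ≥0∞) * μ s)) := by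
          rw [Finset.sum_const, Finset.card_range, nsmul_eq_mul]
          push_cast
          ring_nf
      _ = tail M + (M : ℝ≥0∞) * μ s := by
          rw [← mul_assoc, ENNReal.inv_mul_cancel (hc_ne_zero i) (hc_ne_top i), one_mul]
      _ ≤ ENNReal.ofReal (ε / 2) + (M : ℝ≥0∞) * ENNReal.ofReal (ε / (2 * ((M : ℝ) + 1))) :=
          add_le_add (hM M le_rfl) (mul_le_mul_right hμs _)
      _ ≤ ENNReal.ofReal (ε / 2) + ENNReal.ofReal (ε / 2) := add_le_add_right est1 _
      _ = ENNReal.ofReal ε := by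
          rw [← ENNReal.ofReal_add hε2.le hε2.le]
          norm_num
  -- a.e. convergence of `G n` to the positive part of `F`
  set FP : X → ℝ := fun x => (max (F x) 0).toReal with hFP_def
  have conv : ∀ᵐ x ∂μ, Tendsto (fun n => G n x) atTop (𝓝 (FP x)) := by
    filter_upwards [hF_top, hF_lim] with x htop hlim
    have hcoe : ∀ n : ℕ, ((f n x / n : ℝ) : EReal) = (f n x : EReal) / (n : EReal) := by
      intro n
      rw [EReal.coe_div, EReal.coe_coe_eq_natCast]
    rcases eq_or_ne (F x) ⊥ with hbot | hne
    · rw [hbot] at hlim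
      have h0 : ∀ᶠ n : ℕ in atTop, (f n x : EReal) / (n : EReal) < ((0 : ℝ) : EReal) :=
        (EReal.tendsto_nhds_bot_iff_real.1 hlim) 0
      have h1 : ∀ᶠ n : ℕ in atTop, G n x = 0 := by
        obtain ⟨N, hN⟩ := eventually_atTop.1 h0
        refine eventually_atTop.2 ⟨N, fun n hn => ?_⟩
        have hlt := hN (n + 1) (le_trans hn (Nat.le_succ n))
        rw [← hcoe, EReal.coe_lt_coe_iff] at hlt
        have hfneg : f (n + 1) x < 0 := by
          by_contra hcon
          push_neg at hcon
          have hq : (0 : ℝ) ≤ f (n + 1) x / ((n + 1 : ℕ) : ℝ) :=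
            div_nonneg hcon (by positivity)
          linarith
        rw [hG_def]
        simp [max_eq_right hfneg.le]
      have hFPx : FP x = 0 := by
        simp only [hFP_def]
        rw [hbot, max_eq_right bot_le, EReal.toReal_zero]
      rw [hFPx]
      exact Tendsto.congr' (h1.mono fun n hn => hn.symm) tendsto_const_nhds
    · obtain ⟨c, hc⟩ : ∃ c : ℝ, F x = (c : EReal) :=
        ⟨(F x).toReal, (EReal.coe_toReal htop.ne hne).symm⟩
      rw [hc] at hlim
      have hlim' : Tendsto (fun n : ℕ => f n x / n) atTop (𝓝 c) := by
        rw [← EReal.tendsto_coe]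
        simpa only [hcoe] using hlim
      have hmax : Tendsto (fun n : ℕ => max (f n x / n) 0) atTop (𝓝 (max c 0)) :=
        hlim'.max tendsto_const_nhds
      have h2 : Tendsto (fun n : ℕ => max (f (n + 1) x / ((n + 1 : ℕ) : ℝ)) 0) atTop
          (𝓝 (max c 0)) := hmax.comp (tendsto_add_atTop_nat 1)
      have hFPx : FP x = max c 0 := by
        simp only [hFP_def]
        rw [hc]
        rcases le_total c 0 with hcle | hcle
        · rw [max_eq_right (EReal.coe_nonpos.2 hcle), max_eq_right hcle, EReal.toReal_zero]
        · rw [max_eq_left (EReal.coe_nonneg.2 hcle), max_eq_left hcle, EReal.toReal_coe]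
      rw [hFPx]
      refine h2.congr fun n => ?_
      simp only [hG_def]
      rw [show ((n + 1 : ℕ) : ℝ) = (n : ℝ) + 1 from by push_cast; ring,
        ← max_div_div_right (by positivity : (0:ℝ) ≤ (n:ℝ)+1) (f (n+1) x) 0, zero_div]
  -- integrability of the limit
  have hFP_meas : Measurable FP := (hF_meas.max measurable_const).ereal_toReal
  have hFP_nonneg : ∀ x, 0 ≤ FP x := by
    intro x
    rw [hFP_def]
    rcases eq_or_ne (max (F x) 0) ⊤ with ht | ht
    · simp [ht]
    · have h0 : (0 : EReal) ≤ max (F x) 0 := le_max_right _ _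
      have hb : max (F x) 0 ≠ ⊥ := fun hb => by simp [hb] at h0
      rw [← EReal.coe_toReal ht hb, ← EReal.coe_zero, EReal.coe_le_coe_iff] at h0
      exact h0
  have hFP_int : Integrable FP μ := by
    refine ⟨hFP_meas.aestronglyMeasurable, ?_⟩
    rw [hasFiniteIntegral_iff_ofReal (Eventually.of_forall hFP_nonneg)]
    have hliminf : ∀ᵐ x ∂μ,
        ENNReal.ofReal (FP x) ≤ liminf (fun n => ENNReal.ofReal (G n x)) atTop := by
      filter_upwards [conv] with x hx
      have ht : Tendsto (fun n => ENNReal.ofReal (G n x)) atTop (𝓝 (ENNReal.ofReal (FP x))) :=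
        (ENNReal.continuous_ofReal.tendsto _).comp hx
      exact ht.liminf_eq.ge
    calc ∫⁻ x, ENNReal.ofReal (FP x) ∂μ
        ≤ ∫⁻ x, liminf (fun n => ENNReal.ofReal (G n x)) atTop ∂μ := lintegral_mono_ae hliminf
      _ ≤ liminf (fun n => ∫⁻ x, ENNReal.ofReal (G n x) ∂μ) atTop :=
          lintegral_liminf_le fun n => ENNReal.measurable_ofReal.comp (hG_meas n)
      _ ≤ liminf (fun _n : ℕ => ∫⁻ x, H x ∂μ) atTop :=
          liminf_le_liminf (Eventually.of_forall intB)
      _ = ∫⁻ x, H x ∂μ := liminf_const _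
      _ < ⊤ := hH_int
  -- Vitali convergence theorem
  have vitali : Tendsto (fun n => eLpNorm (G n - FP) 1 μ) atTop (𝓝 0) :=
    tendsto_Lp_finite_of_tendsto_ae le_rfl ENNReal.one_ne_top
      (fun n => (hG_meas n).aestronglyMeasurable)
      ((memLp_one_iff_integrable).2 hFP_int) hUI conv
  have main : Tendsto (fun n => ∫ x, G n x ∂μ) atTop (𝓝 (∫ x, FP x ∂μ)) :=
    tendsto_integral_of_L1' FP hFP_int.1 (Eventually.of_forall fun n => hG_int n) vitali
  refine ⟨hFP_int, ?_⟩
  rw [← Filter.tendsto_add_atTop_iff_nat 1]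
  convert main using 2 with n
  rw [hG_def]
  simp only []
  rw [integral_div]
  push_cast
  ring
end
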